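/- arXiv:2508.06927 — 5 statements merged into one kernel-verified Lean document; each statement's English description precedes it below -/
import Mathlib

section
/- (Theorem 3.1(i)) Suppose RCRCQ holds at x̄ ∈ Γ. Then there exists an open neighborhood U of x̄ such that for every x ∈ Γ ∩ U, every x* ∈ ℝⁿ, and every v ∈ ℝⁿ satisfying ⟨∇q_i(x), v⟩ = 0 for all i ∈ E ∪ I⁺(x, x*), the value ⟨v, ∇²⟨λ, q⟩(x) v⟩ is the same for all λ ∈ Λ(x, x*); consequently Λ(x, x*; v) = Λ(x, x*). -/
open Filter Topology Metric Set
open scoped RealInnerProductSpace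

noncomputable section

/-- The Bouligand (contingent) tangent cone to `s` at `x`. -/
def BCone {V : Type*} [NormedAddCommGroup V] [NormedSpace ℝ V] (s : Set V) (x : V) : Set V :=
  {u | ∃ (t : ℕ → ℝ) (c : ℕ → V), (∀ k, 0 < t k) ∧ Filter.Tendsto t Filter.atTop (𝓝 0) ∧
    Filter.Tendsto c Filter.atTop (𝓝 u) ∧ ∀ k, x + t k • c k ∈ s}

/-- The (convex) normal cone to `K` at `w`; empty when `w ∉ K`. -/
def NCone {V : Type*} [NormedAddCommGroup V] [InnerProductSpace ℝ V] (K : Set V) (w : V) :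
    Set V :=
  {z | w ∈ K ∧ ∀ y ∈ K, ⟪z, y - w⟫ ≤ 0}

variable {n : ℕ} {ι : Type*} [Fintype ι] [DecidableEq ι]

/-- The feasible set `Γ` of the nonlinear program. -/
def Feas (E I : Finset ι) (q : ι → EuclideanSpace ℝ (Fin n) → ℝ) :
    Set (EuclideanSpace ℝ (Fin n)) :=
  {x | (∀ i ∈ E, q i x = 0) ∧ ∀ i ∈ I, q i x ≤ 0}

/-- The set of active inequality constraints at `x`. -/
def ActiveI (I : Finset ι) (q : ι → EuclideanSpace ℝ (Fin n) → ℝ)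
    (x : EuclideanSpace ℝ (Fin n)) : Finset ι :=
  I.filter fun i => q i x = 0

/-- The Lagrange multiplier set `Λ(x, x*)`. -/
def Mult (I : Finset ι) (q : ι → EuclideanSpace ℝ (Fin n) → ℝ)
    (x xs : EuclideanSpace ℝ (Fin n)) : Set (EuclideanSpace ℝ ι) :=
  {lam | ∑ i, lam i • gradient (q i) x = xs ∧ ∀ i ∈ I, 0 ≤ lam i ∧ lam i * q i x = 0}

/-- `I⁺(λ)`: the inequality indices with positive multiplier. -/
def IplusF (I : Finset ι) (lam : EuclideanSpace ℝ ι) : Finset ι :=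
  I.filter fun i => 0 < lam i

/-- `I⁺(x, x*) = ∪_{λ ∈ Λ(x,x*)} I⁺(λ)`. -/
def IplusSet (I : Finset ι) (q : ι → EuclideanSpace ℝ (Fin n) → ℝ)
    (x xs : EuclideanSpace ℝ (Fin n)) : Set ι :=
  {i | ∃ lam ∈ Mult I q x xs, i ∈ IplusF I lam}

/-- Rank of the family of gradients `{∇q_i(x) : i ∈ s}`. -/
def RankAt (q : ι → EuclideanSpace ℝ (Fin n) → ℝ) (s : Finset ι)
    (x : EuclideanSpace ℝ (Fin n)) : ℕ :=
  Module.finrank ℝ (Submodule.span ℝ ((fun i => gradient (q i) x) '' ↑s))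

/-- The relaxed constant rank constraint qualification at `xbar`. -/
def RCRCQat (E I : Finset ι) (q : ι → EuclideanSpace ℝ (Fin n) → ℝ)
    (xbar : EuclideanSpace ℝ (Fin n)) : Prop :=
  ∃ U ∈ 𝓝 xbar, ∀ J ⊆ ActiveI I q xbar, ∀ x ∈ U, ∀ y ∈ U,
    RankAt q (E ∪ J) x = RankAt q (E ∪ J) y

/-- The set `Θ = {0}^E × ℝ₋^I`. -/
def Theta (E I : Finset ι) : Set (EuclideanSpace ℝ ι) :=
  {y | (∀ i ∈ E, y i = 0) ∧ ∀ i ∈ I, y i ≤ 0}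

/-- The metric subregularity constraint qualification at `x` with modulus `κ`. -/
def MSCQat (E I : Finset ι) (q : ι → EuclideanSpace ℝ (Fin n) → ℝ)
    (x : EuclideanSpace ℝ (Fin n)) (κ : ℝ) : Prop :=
  ∃ U ∈ 𝓝 x, ∀ u ∈ U,
    Metric.infDist u (Feas E I q) ≤
      κ * Metric.infDist (show EuclideanSpace ℝ ι from WithLp.toLp 2 fun i => q i u) (Theta E I)

/-- The critical cone `K(x, x*) = T_Γ(x) ∩ {x*}^⊥`. -/
def Crit (E I : Finset ι) (q : ι → EuclideanSpace ℝ (Fin n) → ℝ)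
    (x xs : EuclideanSpace ℝ (Fin n)) : Set (EuclideanSpace ℝ (Fin n)) :=
  BCone (Feas E I q) x ∩ {v | ⟪xs, v⟫ = 0}

/-- Hessian of `f` at `x` applied to `w` (derivative of the gradient map). -/
def HessApp (f : EuclideanSpace ℝ (Fin n) → ℝ) (x w : EuclideanSpace ℝ (Fin n)) :
    EuclideanSpace ℝ (Fin n) :=
  fderiv ℝ (fun y => gradient f y) x w

/-- `∇²⟨λ, q⟩(x) w = Σ_i λ_i ∇²q_i(x) w`. -/
def HessComb (q : ι → EuclideanSpace ℝ (Fin n) → ℝ) (lam : EuclideanSpace ℝ ι)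
    (x w : EuclideanSpace ℝ (Fin n)) : EuclideanSpace ℝ (Fin n) :=
  ∑ i, lam i • HessApp (q i) x w

/-- The quadratic form `⟨v, ∇²⟨λ,q⟩(x) v⟩`. -/
def QuadComb (q : ι → EuclideanSpace ℝ (Fin n) → ℝ) (lam : EuclideanSpace ℝ ι)
    (x v : EuclideanSpace ℝ (Fin n)) : ℝ :=
  ⟪v, HessComb q lam x v⟫

/-- `Λ(x, x*; v)`: the argmax of the quadratic form over `Λ(x, x*)`. -/
def MultArgmax (I : Finset ι) (q : ι → EuclideanSpace ℝ (Fin n) → ℝ)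
    (x xs v : EuclideanSpace ℝ (Fin n)) : Set (EuclideanSpace ℝ ι) :=
  {lam ∈ Mult I q x xs | ∀ mu ∈ Mult I q x xs, QuadComb q mu x v ≤ QuadComb q lam x v}

/-- The set `G = {(u, u*) : u ∈ Γ, Λ(u, u*) ≠ ∅}`. -/
def GSet (E I : Finset ι) (q : ι → EuclideanSpace ℝ (Fin n) → ℝ) :
    Set (EuclideanSpace ℝ (Fin n) × EuclideanSpace ℝ (Fin n)) :=
  {p | p.1 ∈ Feas E I q ∧ (Mult I q p.1 p.2).Nonempty}

/-- Argmin set of the tilted problem `M_γ(v)`. -/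
def MArgmin (φ : EuclideanSpace ℝ (Fin n) → ℝ) (Γ : Set (EuclideanSpace ℝ (Fin n)))
    (xbar : EuclideanSpace ℝ (Fin n)) (γ : ℝ) (v : EuclideanSpace ℝ (Fin n)) :
    Set (EuclideanSpace ℝ (Fin n)) :=
  {x ∈ Γ ∩ Metric.closedBall xbar γ |
    ∀ y ∈ Γ ∩ Metric.closedBall xbar γ, φ x - ⟪v, x⟫ ≤ φ y - ⟪v, y⟫}

/-- Tilt-stable local minimizer with modulus `κ`. -/
def TiltStableWith (φ : EuclideanSpace ℝ (Fin n) → ℝ) (Γ : Set (EuclideanSpace ℝ (Fin n)))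
    (xbar : EuclideanSpace ℝ (Fin n)) (κ : ℝ) : Prop :=
  ∃ γ > (0:ℝ), ∃ W ∈ 𝓝 (0 : EuclideanSpace ℝ (Fin n)),
    ∃ m : EuclideanSpace ℝ (Fin n) → EuclideanSpace ℝ (Fin n),
      m 0 = xbar ∧ (∀ v ∈ W, MArgmin φ Γ xbar γ v = {m v}) ∧
      ∀ v₁ ∈ W, ∀ v₂ ∈ W, ‖m v₁ - m v₂‖ ≤ κ * ‖v₁ - v₂‖

/-- Tilt-stable local minimizer. -/
def TiltStable (φ : EuclideanSpace ℝ (Fin n) → ℝ) (Γ : Set (EuclideanSpace ℝ (Fin n)))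
    (xbar : EuclideanSpace ℝ (Fin n)) : Prop :=
  ∃ κ > (0:ℝ), TiltStableWith φ Γ xbar κ

/-- The exact bound of tilt stability. -/
def TiltBound (φ : EuclideanSpace ℝ (Fin n) → ℝ) (Γ : Set (EuclideanSpace ℝ (Fin n)))
    (xbar : EuclideanSpace ℝ (Fin n)) : ℝ :=
  sInf {κ : ℝ | 0 < κ ∧ TiltStableWith φ Γ xbar κ}


open Asymptotics in
set_option maxHeartbeats 1000000 in

lemma key_quad_zero {n : ℕ} {κ : Type*} [Fintype κ] [DecidableEq κ]
    (g : κ → EuclideanSpace ℝ (Fin n) → EuclideanSpace ℝ (Fin n))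
    (hg : ∀ i, ContDiff ℝ 1 (g i)) (S : Finset κ) (μ : κ → ℝ)
    (x v : EuclideanSpace ℝ (Fin n)) (U₀ : Set (EuclideanSpace ℝ (Fin n))) (hU₀ : U₀ ∈ 𝓝 x)
    (hrank : ∀ y ∈ U₀, Module.finrank ℝ (Submodule.span ℝ ((fun i => g i y) '' ↑S))
      = Module.finrank ℝ (Submodule.span ℝ ((fun i => g i x) '' ↑S)))
    (hF0 : ∑ i ∈ S, μ i • g i x = 0)
    (hv : ∀ i ∈ S, ⟪g i x, v⟫ = 0) :
    ⟪v, ∑ i ∈ S, μ i • fderiv ℝ (g i) x v⟫ = 0 := by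
  classical
  set F : EuclideanSpace ℝ (Fin n) → EuclideanSpace ℝ (Fin n) :=
    fun y => ∑ i ∈ S, μ i • g i y with hFdef
  have hFx : F x = 0 := hF0
  have hgd : ∀ i (y : EuclideanSpace ℝ (Fin n)), HasFDerivAt (g i) (fderiv ℝ (g i) y) y :=
    fun i y => (((hg i).differentiable one_ne_zero) y).hasFDerivAt
  have hFderiv : HasFDerivAt F (∑ i ∈ S, μ i • fderiv ℝ (g i) x) x :=
    HasFDerivAt.fun_sum fun i _ => (hgd i x).const_smul (μ i)
  -- basis extraction
  obtain ⟨b, hbsub, hbspan, hbind⟩ := exists_linearIndependent ℝ ((fun i => g i x) '' ↑S)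
  have hbfin : b.Finite := (S.finite_toSet.image _).subset hbsub
  haveI : Fintype b := hbfin.fintype
  have hchoice : ∀ w : b, ∃ i, i ∈ S ∧ g i x = (w : EuclideanSpace ℝ (Fin n)) := by
    rintro ⟨w, hw⟩
    obtain ⟨i, hi, hgi⟩ := hbsub hw
    exact ⟨i, hi, hgi⟩
  choose h hS hgx using hchoice
  -- antilipschitz at x
  let Lx : (b → ℝ) →ₗ[ℝ] EuclideanSpace ℝ (Fin n) :=
    { toFun := fun c => ∑ w : b, c w • g (h w) x
      map_add' := by intro a c; simp [add_smul, Finset.sum_add_distrib]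
      map_smul' := by intro r c; simp [smul_smul, Finset.smul_sum]
    }
  have hker : LinearMap.ker Lx = ⊥ := by
    rw [LinearMap.ker_eq_bot']
    intro c hc
    have : ∑ w : b, c w • (w : EuclideanSpace ℝ (Fin n)) = 0 := by
      simpa [Lx, hgx] using hc
    funext w
    exact Fintype.linearIndependent_iff.1 hbind c this w
  obtain ⟨K, hK0, hKanti⟩ := Lx.exists_antilipschitzWith hker
  have hKpos : (0:ℝ) < (K:ℝ) := hK0
  have hanti : ∀ c : b → ℝ, ‖c‖ ≤ (K:ℝ) * ‖∑ w : b, c w • g (h w) x‖ := by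
    intro c
    have h1 := hKanti.le_mul_dist c 0
    simpa [Lx, dist_eq_norm, map_zero] using h1
  -- eventual closeness
  have hcont : Continuous (fun y => ∑ w : b, ‖g (h w) y - g (h w) x‖) :=
    continuous_finset_sum _ fun w _ => ((hg (h w)).continuous.sub continuous_const).norm
  have hev1 : ∀ᶠ y in 𝓝 x, ∑ w : b, ‖g (h w) y - g (h w) x‖ ≤ 1 / (2 * K) := by
    have ht : Tendsto (fun y => ∑ w : b, ‖g (h w) y - g (h w) x‖) (𝓝 x) (𝓝 0) := by
      have hc := hcont.continuousAt (x := x)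
      simpa [ContinuousAt] using hc
    have := ht (Iio_mem_nhds (show (0:ℝ) < 1/(2*K) by positivity))
    filter_upwards [this] with y hy using le_of_lt hy
  -- quantitative independence
  have hquant : ∀ y : EuclideanSpace ℝ (Fin n),
      (∑ w : b, ‖g (h w) y - g (h w) x‖ ≤ 1 / (2 * K)) →
      ∀ c : b → ℝ, ‖c‖ ≤ 2 * K * ‖∑ w : b, c w • g (h w) y‖ := by
    intro y hy c
    have h1 : ‖c‖ ≤ K * ‖∑ w : b, c w • g (h w) x‖ := hanti c
    have h2 : ‖∑ w : b, c w • g (h w) x‖ ≤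
        ‖∑ w : b, c w • g (h w) y‖ + ‖c‖ * (∑ w : b, ‖g (h w) y - g (h w) x‖) := by
      have e : ∑ w : b, c w • g (h w) x =
          (∑ w : b, c w • g (h w) y) + ∑ w : b, c w • (g (h w) x - g (h w) y) := by
        rw [← Finset.sum_add_distrib]
        refine Finset.sum_congr rfl fun w _ => ?_
        rw [← smul_add]
        congr 1
        abel
      rw [e]
      refine (norm_add_le _ _).trans (add_le_add le_rfl ?_)
      calc ‖∑ w : b, c w • (g (h w) x - g (h w) y)‖
          ≤ ∑ w : b, ‖c w • (g (h w) x - g (h w) y)‖ := norm_sum_le _ _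
        _ ≤ ∑ w : b, ‖c‖ * ‖g (h w) y - g (h w) x‖ := by
            refine Finset.sum_le_sum fun w _ => ?_
            rw [norm_smul, ← norm_neg (g (h w) x - g (h w) y)]
            simp only [neg_sub]
            exact mul_le_mul_of_nonneg_right (norm_le_pi_norm c w) (norm_nonneg _)
        _ = ‖c‖ * ∑ w : b, ‖g (h w) y - g (h w) x‖ := by rw [Finset.mul_sum]
    have h3 : ‖c‖ * (∑ w : b, ‖g (h w) y - g (h w) x‖) ≤ ‖c‖ * (1/(2*K)) :=
      mul_le_mul_of_nonneg_left hy (norm_nonneg _)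
    have h4 : (K:ℝ) * (‖c‖ * (1/(2*K))) = ‖c‖ / 2 := by field_simp
    have h5 : ‖c‖ ≤ K * ‖∑ w : b, c w • g (h w) y‖ + ‖c‖ / 2 := by
      calc ‖c‖ ≤ K * ‖∑ w : b, c w • g (h w) x‖ := h1
        _ ≤ K * (‖∑ w : b, c w • g (h w) y‖ + ‖c‖ * (∑ w : b, ‖g (h w) y - g (h w) x‖)) :=
            mul_le_mul_of_nonneg_left h2 hKpos.le
        _ ≤ K * (‖∑ w : b, c w • g (h w) y‖ + ‖c‖ * (1/(2*K))) := by nlinarith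
        _ = K * ‖∑ w : b, c w • g (h w) y‖ + ‖c‖ / 2 := by rw [mul_add, h4]
    linarith
  -- membership in span of the sub-basis family
  have hmem : ∀ y ∈ U₀, (∑ w : b, ‖g (h w) y - g (h w) x‖ ≤ 1 / (2 * K)) →
      F y ∈ Submodule.span ℝ (Set.range fun w : b => g (h w) y) := by
    intro y hyU hyc
    have hind_y : LinearIndependent ℝ (fun w : b => g (h w) y) := by
      rw [Fintype.linearIndependent_iff]
      intro c hc w
      have h0 : ‖c‖ ≤ 0 := by
        have := hquant y hyc c
        rwa [hc, norm_zero, mul_zero] at this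
      have : ‖c w‖ ≤ 0 := le_trans (norm_le_pi_norm c w) h0
      simpa using norm_le_zero_iff.1 this
    have hle : Submodule.span ℝ (Set.range fun w : b => g (h w) y) ≤
        Submodule.span ℝ ((fun i => g i y) '' ↑S) := by
      refine Submodule.span_le.2 ?_
      rintro _ ⟨w, rfl⟩
      exact Submodule.subset_span ⟨h w, hS w, rfl⟩
    have hcard1 : Module.finrank ℝ (Submodule.span ℝ (Set.range fun w : b => g (h w) y)) =
        Fintype.card b := finrank_span_eq_card hind_y
    have hcardx : Module.finrank ℝ (Submodule.span ℝ ((fun i => g i x) '' ↑S)) =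
        Fintype.card b := by
      rw [← hbspan, finrank_span_set_eq_card hbind, Set.toFinset_card]
    have heq : Submodule.span ℝ (Set.range fun w : b => g (h w) y) =
        Submodule.span ℝ ((fun i => g i y) '' ↑S) := by
      apply Submodule.eq_of_le_of_finrank_eq hle
      rw [hcard1, hrank y hyU, hcardx]
    rw [heq]
    refine Submodule.sum_mem _ fun i hi => Submodule.smul_mem _ _ ?_
    exact Submodule.subset_span ⟨i, hi, rfl⟩
  -- the curve
  have hx0 : x + (0:ℝ) • v = x := by simp
  have hline : HasDerivAt (fun t : ℝ => x + t • v) v 0 := by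
    simpa using ((hasDerivAt_id (0:ℝ)).smul_const v).const_add x
  have htend : Tendsto (fun t : ℝ => x + t • v) (𝓝 0) (𝓝 x) := by
    have hc : Continuous (fun t : ℝ => x + t • v) :=
      continuous_const.add (continuous_id.smul continuous_const)
    have := hc.continuousAt (x := (0:ℝ))
    simpa [ContinuousAt, hx0] using this
  have hψ : HasDerivAt (fun t : ℝ => F (x + t • v)) ((∑ i ∈ S, μ i • fderiv ℝ (g i) x) v) 0 := by
    have hF' : HasFDerivAt F (∑ i ∈ S, μ i • fderiv ℝ (g i) x) (x + (0:ℝ) • v) := by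
      rw [hx0]; exact hFderiv
    have := hF'.comp_hasDerivAt 0 hline
    exact this
  have hψ0 : F (x + (0:ℝ) • v) = 0 := by rw [hx0, hFx]
  set D : EuclideanSpace ℝ (Fin n) := (∑ i ∈ S, μ i • fderiv ℝ (g i) x) v with hD
  have hφ : HasDerivAt (fun t : ℝ => ⟪v, F (x + t • v)⟫) ⟪v, D⟫ 0 := by
    have h1 := (hasDerivAt_const (0:ℝ) v).inner ℝ hψ
    simp only [inner_zero_left, add_zero] at h1
    exact h1
  -- big-O bounds
  have hFO : (fun t : ℝ => F (x + t • v)) =O[𝓝 0] (fun t : ℝ => t) := by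
    have h1 := hψ.hasFDerivAt.isBigO_sub
    refine h1.congr (fun t => ?_) (fun t => sub_zero t)
    rw [hψ0, sub_zero]
  have hβO : ∀ w : b, (fun t : ℝ => ⟪v, g (h w) (x + t • v)⟫) =O[𝓝 0] (fun t : ℝ => t) := by
    intro w
    have hgF' : HasFDerivAt (g (h w)) (fderiv ℝ (g (h w)) x) (x + (0:ℝ) • v) := by
      rw [hx0]; exact hgd (h w) x
    have hder : HasDerivAt (fun t : ℝ => g (h w) (x + t • v)) (fderiv ℝ (g (h w)) x v) 0 := by
      have := hgF'.comp_hasDerivAt 0 hline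
      exact this
    have hinner : HasDerivAt (fun t : ℝ => ⟪v, g (h w) (x + t • v)⟫)
        ⟪v, fderiv ℝ (g (h w)) x v⟫ 0 := by
      have h1 := (hasDerivAt_const (0:ℝ) v).inner ℝ hder
      simp only [inner_zero_left, add_zero] at h1
      exact h1
    have h0 : ⟪v, g (h w) (x + (0:ℝ) • v)⟫ = (0:ℝ) := by
      rw [hx0, real_inner_comm]
      exact hv (h w) (hS w)
    have h1 := hinner.hasFDerivAt.isBigO_sub
    refine h1.congr (fun t => ?_) (fun t => sub_zero t)
    rw [h0, sub_zero]
  have hsumO : (fun t : ℝ => ∑ w : b, ‖⟪v, g (h w) (x + t • v)⟫‖) =O[𝓝 0] (fun t : ℝ => t) :=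
    IsBigO.fun_sum (fun w _ => (hβO w).norm_left)
  -- eventual bound on φ
  have hevU : ∀ᶠ t : ℝ in 𝓝 0, x + t • v ∈ U₀ := htend hU₀
  have hevC : ∀ᶠ t : ℝ in 𝓝 0, ∑ w : b, ‖g (h w) (x + t • v) - g (h w) x‖ ≤ 1 / (2 * K) :=
    htend.eventually hev1
  have hbound : ∀ᶠ t : ℝ in 𝓝 0, ‖⟪v, F (x + t • v)⟫‖ ≤
      (2*K) * ‖(fun t : ℝ => ‖F (x + t • v)‖ * ∑ w : b, ‖⟪v, g (h w) (x + t • v)⟫‖) t‖ := by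
    filter_upwards [hevU, hevC] with t htU htC
    obtain ⟨c, hc⟩ := (Submodule.mem_span_range_iff_exists_fun ℝ).1 (hmem _ htU htC)
    have hφt : ⟪v, F (x + t • v)⟫ = ∑ w : b, c w * ⟪v, g (h w) (x + t • v)⟫ := by
      rw [← hc, inner_sum]
      refine Finset.sum_congr rfl fun w _ => ?_
      rw [real_inner_smul_right]
    have hcb : ‖c‖ ≤ 2 * K * ‖F (x + t • v)‖ := by
      have := hquant _ htC c
      rwa [hc] at this
    rw [hφt]
    calc ‖∑ w : b, c w * ⟪v, g (h w) (x + t • v)⟫‖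
        ≤ ∑ w : b, ‖c w * ⟪v, g (h w) (x + t • v)⟫‖ := norm_sum_le _ _
      _ ≤ ∑ w : b, ‖c‖ * ‖⟪v, g (h w) (x + t • v)⟫‖ := by
          refine Finset.sum_le_sum fun w _ => ?_
          rw [norm_mul]
          exact mul_le_mul_of_nonneg_right (norm_le_pi_norm c w) (norm_nonneg _)
      _ = ‖c‖ * ∑ w : b, ‖⟪v, g (h w) (x + t • v)⟫‖ := by rw [Finset.mul_sum]
      _ ≤ (2 * K * ‖F (x + t • v)‖) * ∑ w : b, ‖⟪v, g (h w) (x + t • v)⟫‖ := by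
          refine mul_le_mul_of_nonneg_right hcb ?_
          positivity
      _ ≤ (2*K) * ‖‖F (x + t • v)‖ * ∑ w : b, ‖⟪v, g (h w) (x + t • v)⟫‖‖ := by
          rw [mul_assoc]
          exact mul_le_mul_of_nonneg_left (le_abs_self _) (by positivity)
  have hφO : (fun t : ℝ => ⟪v, F (x + t • v)⟫) =O[𝓝 0] (fun t : ℝ => t * t) := by
    refine (IsBigO.of_bound (2*K) hbound).trans ?_
    exact hFO.norm_left.mul hsumO
  have htt : (fun t : ℝ => t * t) =o[𝓝 0] (fun t : ℝ => t) := by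
    have h1 : (fun t : ℝ => t) =o[𝓝 0] (fun _ : ℝ => (1:ℝ)) := by
      rw [isLittleO_one_iff]
      exact Filter.tendsto_id
    have := h1.mul_isBigO (isBigO_refl (fun t : ℝ => t) (𝓝 0))
    simpa using this
  have hφo : (fun t : ℝ => ⟪v, F (x + t • v)⟫) =o[𝓝 0] (fun t : ℝ => t) :=
    hφO.trans_isLittleO htt
  have hφ' : HasDerivAt (fun t : ℝ => ⟪v, F (x + t • v)⟫) 0 0 := by
    rw [hasDerivAt_iff_isLittleO]
    have h0 : ⟪v, F (x + (0:ℝ) • v)⟫ = (0:ℝ) := by rw [hψ0, inner_zero_right]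
    refine hφo.congr (fun t => ?_) (fun t => (sub_zero t).symm)
    rw [h0]
    simp
  have huniq : ⟪v, D⟫ = (0:ℝ) := hφ.unique hφ'
  rw [hD] at huniq
  rw [← huniq]
  congr 1
  rw [ContinuousLinearMap.sum_apply]
  refine Finset.sum_congr rfl fun i _ => ?_
  rw [ContinuousLinearMap.smul_apply]


set_option maxHeartbeats 1000000 in
/-- **Theorem 3.1(i).** Under RCRCQ at `x̄ ∈ Γ`, on a neighborhood of `x̄`, for every feasible `x`,
every `x*` and every `v` orthogonal to `∇q_i(x)` for all `i ∈ E ∪ I⁺(x, x*)`, the quadratic form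
`⟨v, ∇²⟨λ,q⟩(x)v⟩` is constant in `λ ∈ Λ(x, x*)`; consequently `Λ(x, x*; v) = Λ(x, x*)`. -/
theorem rcrcq_multArgmax_eq_mult
    {n : ℕ} {ι : Type*} [Fintype ι] [DecidableEq ι] [Nonempty ι]
    (E I : Finset ι) (hdisj : Disjoint E I) (hunion : E ∪ I = Finset.univ)
    (q : ι → EuclideanSpace ℝ (Fin n) → ℝ) (hq : ∀ i, ContDiff ℝ 2 (q i))
    (xbar : EuclideanSpace ℝ (Fin n)) (hfeas : xbar ∈ Feas E I q)
    (hrcrcq : RCRCQat E I q xbar) :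
    ∃ U : Set (EuclideanSpace ℝ (Fin n)), IsOpen U ∧ xbar ∈ U ∧
      ∀ x ∈ Feas E I q ∩ U, ∀ xs v : EuclideanSpace ℝ (Fin n),
        (∀ i, (i ∈ E ∨ i ∈ IplusSet I q x xs) → ⟪gradient (q i) x, v⟫ = 0) →
        (∀ lam₁ ∈ Mult I q x xs, ∀ lam₂ ∈ Mult I q x xs,
            QuadComb q lam₁ x v = QuadComb q lam₂ x v) ∧
        MultArgmax I q x xs v = Mult I q x xs := by
  classical
  obtain ⟨U₀, hU₀, hrk⟩ := hrcrcq
  set W : Set (EuclideanSpace ℝ (Fin n)) :=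
    ⋂ i ∈ (I \ ActiveI I q xbar), {y | q i y < 0} with hW
  have hWopen : IsOpen W := by
    refine isOpen_biInter_finset fun i _ => ?_
    exact isOpen_lt (hq i).continuous continuous_const
  have hxW : xbar ∈ W := by
    simp only [hW, Set.mem_iInter]
    intro i hi
    rw [Finset.mem_sdiff] at hi
    have h1 := hfeas.2 i hi.1
    have h2 : q i xbar ≠ 0 := fun h => hi.2 (Finset.mem_filter.2 ⟨hi.1, h⟩)
    exact lt_of_le_of_ne h1 h2
  refine ⟨interior U₀ ∩ W, isOpen_interior.inter hWopen,
    ⟨mem_interior_iff_mem_nhds.2 hU₀, hxW⟩, ?_⟩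
  rintro x ⟨hxF, hxU⟩ xs v hv
  have hxU₀ : x ∈ U₀ := interior_subset hxU.1
  have hU₀x : U₀ ∈ 𝓝 x :=
    mem_nhds_iff.2 ⟨interior U₀, interior_subset, isOpen_interior, hxU.1⟩
  have hgC1 : ∀ i, ContDiff ℝ 1 (fun y => gradient (q i) y) := by
    intro i
    have h1 : ContDiff ℝ 1 (fderiv ℝ (q i)) := (hq i).fderiv_right (by norm_num)
    exact (InnerProductSpace.toDual ℝ (EuclideanSpace ℝ (Fin n))).symm.contDiff.comp h1
  have hconst : ∀ lam₁ ∈ Mult I q x xs, ∀ lam₂ ∈ Mult I q x xs,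
      QuadComb q lam₁ x v = QuadComb q lam₂ x v := by
    intro lam₁ h₁ lam₂ h₂
    set μ : ι → ℝ := fun i => lam₁ i - lam₂ i with hμ
    set J : Finset ι := I.filter (fun i => μ i ≠ 0) with hJdef
    have hJ : J ⊆ ActiveI I q xbar := by
      intro i hi
      rw [hJdef, Finset.mem_filter] at hi
      obtain ⟨hiI, hine⟩ := hi
      have hact : q i x = 0 := by
        by_contra hne
        have e1 := (h₁.2 i hiI).2
        have e2 := (h₂.2 i hiI).2
        have z1 : lam₁ i = 0 := by
          rcases mul_eq_zero.1 e1 with h | h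
          · exact h
          · exact absurd h hne
        have z2 : lam₂ i = 0 := by
          rcases mul_eq_zero.1 e2 with h | h
          · exact h
          · exact absurd h hne
        exact hine (by rw [hμ]; simp [z1, z2])
      by_contra hnin
      have hxWmem : x ∈ W := hxU.2
      have : q i x < 0 := by
        rw [hW] at hxWmem
        simp only [Set.mem_iInter] at hxWmem
        exact hxWmem i (Finset.mem_sdiff.2 ⟨hiI, hnin⟩)
      exact absurd hact (ne_of_lt this)
    have hsupp : ∀ i, i ∉ E ∪ J → μ i = 0 := by
      intro i hi
      rw [Finset.mem_union] at hi
      push_neg at hi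
      have hiI : i ∈ I := by
        have hmem : i ∈ E ∪ I := by rw [hunion]; exact Finset.mem_univ i
        rcases Finset.mem_union.1 hmem with h | h
        · exact absurd h hi.1
        · exact h
      by_contra hne
      exact hi.2 (Finset.mem_filter.2 ⟨hiI, hne⟩)
    have hvS : ∀ i ∈ E ∪ J, ⟪gradient (q i) x, v⟫ = 0 := by
      intro i hi
      rcases Finset.mem_union.1 hi with h | h
      · exact hv i (Or.inl h)
      · refine hv i (Or.inr ?_)
        rw [hJdef, Finset.mem_filter] at h
        obtain ⟨hiI, hne⟩ := h
        have hnee : lam₁ i ≠ lam₂ i := sub_ne_zero.1 hne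
        have p1 := (h₁.2 i hiI).1
        have p2 := (h₂.2 i hiI).1
        rcases hnee.lt_or_gt with hlt | hgt
        · exact ⟨lam₂, h₂, Finset.mem_filter.2 ⟨hiI, lt_of_le_of_lt p1 hlt⟩⟩
        · exact ⟨lam₁, h₁, Finset.mem_filter.2 ⟨hiI, lt_of_le_of_lt p2 hgt⟩⟩
    have hrank : ∀ y ∈ U₀,
        Module.finrank ℝ (Submodule.span ℝ ((fun i => gradient (q i) y) '' ↑(E ∪ J)))
          = Module.finrank ℝ (Submodule.span ℝ ((fun i => gradient (q i) x) '' ↑(E ∪ J))) :=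
      fun y hy => hrk J hJ y hy x hxU₀
    have hsum0 : ∑ i ∈ E ∪ J, μ i • gradient (q i) x = 0 := by
      have hto : ∑ i ∈ E ∪ J, μ i • gradient (q i) x = ∑ i, μ i • gradient (q i) x :=
        Finset.sum_subset (Finset.subset_univ _)
          (fun i _ hni => by rw [hsupp i hni, zero_smul])
      rw [hto]
      have : ∀ i : ι, μ i • gradient (q i) x
          = lam₁ i • gradient (q i) x - lam₂ i • gradient (q i) x :=
        fun i => sub_smul _ _ _
      rw [Finset.sum_congr rfl fun i _ => this i, Finset.sum_sub_distrib, h₁.1, h₂.1, sub_self]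
    have hkey := key_quad_zero (fun i y => gradient (q i) y) hgC1 (E ∪ J) μ x v U₀ hU₀x
      hrank hsum0 hvS
    have hdiff : QuadComb q lam₁ x v - QuadComb q lam₂ x v = 0 := by
      have e1 : QuadComb q lam₁ x v - QuadComb q lam₂ x v
          = ⟪v, HessComb q lam₁ x v - HessComb q lam₂ x v⟫ := by
        rw [QuadComb, QuadComb, inner_sub_right]
      rw [e1]
      have e2 : HessComb q lam₁ x v - HessComb q lam₂ x v
          = ∑ i ∈ E ∪ J, μ i • fderiv ℝ (fun y => gradient (q i) y) x v := by
        rw [HessComb, HessComb, ← Finset.sum_sub_distrib]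
        have hto2 : ∑ i ∈ E ∪ J, μ i • fderiv ℝ (fun y => gradient (q i) y) x v
            = ∑ i, μ i • fderiv ℝ (fun y => gradient (q i) y) x v :=
          Finset.sum_subset (Finset.subset_univ _)
            (fun i _ hni => by rw [hsupp i hni, zero_smul])
        rw [hto2]
        refine Finset.sum_congr rfl fun i _ => ?_
        show lam₁ i • HessApp (q i) x v - lam₂ i • HessApp (q i) x v
          = μ i • fderiv ℝ (fun y => gradient (q i) y) x v
        rw [hμ, ← sub_smul]
        rfl
      rw [e2]
      exact hkey
    linarith
  refine ⟨hconst, ?_⟩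
  ext lam
  constructor
  · rintro ⟨hmem, -⟩
    exact hmem
  · intro hmem
    exact ⟨hmem, fun mu hmu => le_of_eq (hconst mu hmu lam hmem)⟩

end
end

section
/- (From the proof of Theorem 3.1(i)) Suppose RCRCQ holds at x̄ ∈ Γ. Then there exists an open neighborhood U of x̄ such that for every x ∈ Γ ∩ U, every x* ∈ ℝⁿ, and every v ∈ ℝⁿ with ⟨∇q_i(x), v⟩ = 0 for all i ∈ E ∪ I⁺(x, x*), there exist t̄ > 0 and a continuously differentiable curve x̃ : (−t̄, t̄) → ℝⁿ such that x̃(0) = x, x̃′(0) = v, and q_i(x̃(t)) = 0 for all i ∈ E ∪ I⁺(x, x*) and all t ∈ (−t̄, t̄). -/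
open Filter Topology Metric Set
open scoped RealInnerProductSpace

noncomputable section

variable {n : ℕ} {ι : Type*} [Fintype ι] [DecidableEq ι]

lemma fderiv_eq_inner_gradient {n : ℕ} (f : EuclideanSpace ℝ (Fin n) → ℝ)
    (x w : EuclideanSpace ℝ (Fin n)) : fderiv ℝ f x w = ⟪gradient f x, w⟫ := by
  rw [gradient]
  exact (InnerProductSpace.toDual_symm_apply).symm

lemma continuous_gradient' {n : ℕ} {f : EuclideanSpace ℝ (Fin n) → ℝ} (hf : ContDiff ℝ 2 f) :
    Continuous fun y => gradient f y := by
  have h1 : Continuous fun y => fderiv ℝ f y := hf.continuous_fderiv (by norm_num)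
  exact (InnerProductSpace.toDual ℝ _).symm.continuous.comp h1

lemma exists_spanning_indep {n : ℕ} {ι : Type*} [DecidableEq ι]
    (g : ι → EuclideanSpace ℝ (Fin n)) (S : Finset ι) :
    ∃ J : Finset ι, J ⊆ S ∧ LinearIndependent ℝ (fun j : J => g j) ∧
      Submodule.span ℝ (g '' ↑J) = Submodule.span ℝ (g '' ↑S) := by
  classical
  obtain ⟨b, hb_sub, hb_span, hb_ind⟩ := exists_linearIndependent ℝ (g '' ↑S)
  have hbfin : b.Finite := (S.finite_toSet.image g).subset hb_sub
  haveI := hbfin.fintype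
  have hchoice : ∀ w : b, ∃ i, i ∈ S ∧ g i = (w : EuclideanSpace ℝ (Fin n)) := by
    rintro ⟨w, hw⟩
    rcases hb_sub hw with ⟨i, hi, hgi⟩
    exact ⟨i, hi, hgi⟩
  choose f hfS hfg using hchoice
  refine ⟨Finset.univ.image f, ?_, ?_, ?_⟩
  · intro j hj
    simp only [Finset.mem_image] at hj
    obtain ⟨w, _, rfl⟩ := hj
    exact hfS w
  · have he : ∀ j : (Finset.univ.image f : Finset ι), g ↑j ∈ b := by
      rintro ⟨j, hj⟩
      simp only [Finset.mem_image] at hj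
      obtain ⟨w, _, rfl⟩ := hj
      rw [hfg w]; exact w.2
    have hfactor : (fun j : (Finset.univ.image f : Finset ι) => g ↑j)
        = (fun w : b => (w : EuclideanSpace ℝ (Fin n))) ∘ (fun j : (Finset.univ.image f : Finset ι) => (⟨g ↑j, he j⟩ : b)) := rfl
    rw [hfactor]
    refine hb_ind.comp _ ?_
    rintro ⟨j₁, hj₁⟩ ⟨j₂, hj₂⟩ h
    obtain ⟨w₁, -, rfl⟩ := Finset.mem_image.1 hj₁
    obtain ⟨w₂, -, rfl⟩ := Finset.mem_image.1 hj₂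
    have hval : g (f w₁) = g (f w₂) := congrArg Subtype.val h
    rw [hfg w₁, hfg w₂] at hval
    exact Subtype.ext (congrArg f (Subtype.ext hval))
  · have himg : g '' ↑(Finset.univ.image f) = b := by
      ext w
      constructor
      · rintro ⟨j, hj, rfl⟩
        simp only [Finset.coe_image, Finset.coe_univ, Set.image_univ, Set.mem_range] at hj
        obtain ⟨w', rfl⟩ := hj
        rw [hfg w']; exact w'.2
      · intro hw
        refine ⟨f ⟨w, hw⟩, ?_, hfg _⟩
        simp only [Finset.coe_image, Finset.coe_univ, Set.image_univ, Set.mem_range]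
        exact ⟨⟨w, hw⟩, rfl⟩
    rw [himg, hb_span]


lemma finset_image_coe_eq_range {α V : Type*} (g : α → V) (J : Finset α) :
    g '' ↑J = Set.range (fun j : J => g j) := by
  ext w
  constructor
  · rintro ⟨a, ha, rfl⟩; exact ⟨⟨a, ha⟩, rfl⟩
  · rintro ⟨⟨a, ha⟩, rfl⟩; exact ⟨a, ha, rfl⟩

set_option maxHeartbeats 2000000 in
/-- **From the proof of Theorem 3.1(i).** Under RCRCQ at `x̄ ∈ Γ`, on a neighborhood of `x̄`,
for every feasible `x`, every `x*` and every `v` orthogonal to `∇q_i(x)` for all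
`i ∈ E ∪ I⁺(x, x*)`, there is a `C¹` curve `x̃` with `x̃(0) = x`, `x̃′(0) = v` and
`q_i(x̃(t)) = 0` for all `i ∈ E ∪ I⁺(x, x*)` and all `t ∈ (−t̄, t̄)`. -/
theorem rcrcq_curve_construction
    {n : ℕ} {ι : Type*} [Fintype ι] [DecidableEq ι] [Nonempty ι]
    (E I : Finset ι) (hdisj : Disjoint E I) (hunion : E ∪ I = Finset.univ)
    (q : ι → EuclideanSpace ℝ (Fin n) → ℝ) (hq : ∀ i, ContDiff ℝ 2 (q i))
    (xbar : EuclideanSpace ℝ (Fin n)) (hfeas : xbar ∈ Feas E I q)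
    (hrcrcq : RCRCQat E I q xbar) :
    ∃ U : Set (EuclideanSpace ℝ (Fin n)), IsOpen U ∧ xbar ∈ U ∧
      ∀ x ∈ Feas E I q ∩ U, ∀ xs v : EuclideanSpace ℝ (Fin n),
        (∀ i, (i ∈ E ∨ i ∈ IplusSet I q x xs) → ⟪gradient (q i) x, v⟫ = 0) →
        ∃ tb > (0:ℝ), ∃ c : ℝ → EuclideanSpace ℝ (Fin n),
          ContDiffOn ℝ 1 c (Set.Ioo (-tb) tb) ∧ c 0 = x ∧ HasDerivAt c v 0 ∧
          ∀ t ∈ Set.Ioo (-tb) tb, ∀ i, (i ∈ E ∨ i ∈ IplusSet I q x xs) → q i (c t) = 0 := by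
  classical
  obtain ⟨U₀, hU₀, hrank⟩ := hrcrcq
  set W : Set (EuclideanSpace ℝ (Fin n)) := {y | ∀ i ∈ I, q i xbar < 0 → q i y < 0} with hW
  have hWopen : IsOpen W := by
    have hWeq : W = ⋂ i ∈ I, {y | q i xbar < 0 → q i y < 0} := by
      ext y; simp [hW, Set.mem_iInter]
    rw [hWeq]
    refine isOpen_biInter_finset ?_
    intro i _
    by_cases hi : q i xbar < 0
    · have : {y : EuclideanSpace ℝ (Fin n) | q i xbar < 0 → q i y < 0} = {y | q i y < 0} := by
        ext y; simp [hi]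
      rw [this]
      exact isOpen_lt ((hq i).continuous) continuous_const
    · have : {y : EuclideanSpace ℝ (Fin n) | q i xbar < 0 → q i y < 0} = Set.univ := by
        ext y; simp [hi]
      rw [this]; exact isOpen_univ
  have hWmem : xbar ∈ W := fun i _ h => h
  refine ⟨interior U₀ ∩ W, isOpen_interior.inter hWopen,
    ⟨mem_interior_iff_mem_nhds.2 hU₀, hWmem⟩, ?_⟩
  rintro x ⟨hxF, hxU, hxW⟩ xs v hv
  set S : Finset ι := Finset.univ.filter (fun i => i ∈ E ∨ i ∈ IplusSet I q x xs) with hSdef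
  have hmemS : ∀ i, (i ∈ E ∨ i ∈ IplusSet I q x xs) ↔ i ∈ S := by
    intro i; simp [hSdef]
  have hq0 : ∀ i ∈ S, q i x = 0 := by
    intro i hi
    rcases (hmemS i).2 hi with hiE | hiI
    · exact hxF.1 i hiE
    · obtain ⟨lam, hlam, hip⟩ := hiI
      rw [IplusF, Finset.mem_filter] at hip
      have h2 := (hlam.2 i hip.1).2
      exact (mul_eq_zero.1 h2).resolve_left (ne_of_gt hip.2)
  have hact : ∀ i ∈ S, i ∉ E → i ∈ ActiveI I q xbar := by
    intro i hi hiE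
    rcases (hmemS i).2 hi with h | hiI
    · exact absurd h hiE
    obtain ⟨lam, hlam, hip⟩ := hiI
    rw [IplusF, Finset.mem_filter] at hip
    rw [ActiveI, Finset.mem_filter]
    refine ⟨hip.1, ?_⟩
    by_contra hne
    have hlt : q i xbar < 0 := lt_of_le_of_ne (hfeas.2 i hip.1) hne
    have hxlt := hxW i hip.1 hlt
    rw [hq0 i hi] at hxlt
    exact lt_irrefl 0 hxlt
  have hES : E ⊆ S := fun i hi => (hmemS i).1 (Or.inl hi)
  set g : ι → EuclideanSpace ℝ (Fin n) := fun i => gradient (q i) x with hgdef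
  have hvS : ∀ i ∈ S, ⟪g i, v⟫ = 0 := fun i hi => hv i ((hmemS i).2 hi)
  obtain ⟨J₀, hJS, hJind, hJspan⟩ := exists_spanning_indep g S
  have hxU₀ : x ∈ U₀ := interior_subset hxU
  have himgJ : g '' ↑J₀ = Set.range (fun j : J₀ => g ↑j) := finset_image_coe_eq_range g J₀
  have hrankx : ∀ i ∈ S, ∀ y ∈ U₀, RankAt q (E ∪ J₀ ∪ {i}) y = J₀.card := by
    intro i hi y hy
    have hDS : ↑(E ∪ J₀ ∪ {i}) ⊆ (S : Set ι) := by
      intro a ha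
      simp only [Finset.coe_union, Set.mem_union, Finset.mem_coe, Finset.coe_singleton,
        Set.mem_singleton_iff] at ha
      rcases ha with (ha | ha) | ha
      · exact hES ha
      · exact hJS ha
      · subst ha; exact hi
    have hJD : (J₀ : Set ι) ⊆ ↑(E ∪ J₀ ∪ {i}) := by
      intro a ha; simp only [Finset.coe_union, Set.mem_union]; exact Or.inl (Or.inr ha)
    have hxval : RankAt q (E ∪ J₀ ∪ {i}) x = J₀.card := by
      show Module.finrank ℝ
        (Submodule.span ℝ ((fun i => gradient (q i) x) '' ↑(E ∪ J₀ ∪ {i}))) = J₀.card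
      have h1 : Submodule.span ℝ (g '' ↑(E ∪ J₀ ∪ {i})) = Submodule.span ℝ (g '' ↑J₀) := by
        apply le_antisymm
        · rw [hJspan]; exact Submodule.span_mono (Set.image_mono hDS)
        · exact Submodule.span_mono (Set.image_mono hJD)
      rw [show ((fun i => gradient (q i) x)) = g from rfl, h1, himgJ,
        finrank_span_eq_card hJind, Fintype.card_coe]
    have hDeq : E ∪ J₀ ∪ {i} = E ∪ ((J₀ ∪ {i}) \ E) := by
      ext a
      simp only [Finset.mem_union, Finset.mem_sdiff, Finset.mem_singleton]
      tauto
    have hJact : (J₀ ∪ {i}) \ E ⊆ ActiveI I q xbar := by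
      intro a ha
      rw [Finset.mem_sdiff, Finset.mem_union, Finset.mem_singleton] at ha
      have haS : a ∈ S := by rcases ha.1 with h | h; exacts [hJS h, h ▸ hi]
      exact hact a haS ha.2
    have h5 : RankAt q (E ∪ J₀ ∪ {i}) y = RankAt q (E ∪ J₀ ∪ {i}) x := by
      rw [hDeq]; exact hrank _ hJact y hy x hxU₀
    rw [h5]; exact hxval
  have hcontg : ∀ j : ι, Continuous fun y => gradient (q j) y :=
    fun j => continuous_gradient' (hq j)
  set Vind : Set (EuclideanSpace ℝ (Fin n)) :=
    {y | LinearIndependent ℝ (fun j : J₀ => gradient (q ↑j) y)} with hVinddef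
  have hVopen : IsOpen Vind := by
    have hVeq : Vind = (fun y => fun j : J₀ => gradient (q ↑j) y) ⁻¹'
        {w : J₀ → EuclideanSpace ℝ (Fin n) | LinearIndependent ℝ w} := rfl
    rw [hVeq]
    exact IsOpen.preimage (continuous_pi fun j : J₀ => hcontg (j : ι)) isOpen_setOf_linearIndependent
  have hxVind : x ∈ Vind := hJind
  have hkey : ∀ y, y ∈ U₀ → y ∈ Vind → ∀ i ∈ S,
      gradient (q i) y ∈ Submodule.span ℝ ((fun j => gradient (q j) y) '' ↑J₀) := by
    intro y hy1 hy2 i hi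
    have hle : Submodule.span ℝ ((fun j => gradient (q j) y) '' ↑J₀)
        ≤ Submodule.span ℝ ((fun j => gradient (q j) y) '' ↑(E ∪ J₀ ∪ {i})) := by
      apply Submodule.span_mono; apply Set.image_mono
      intro a ha; simp only [Finset.coe_union, Set.mem_union]; exact Or.inl (Or.inr ha)
    have h1 : Module.finrank ℝ
        (Submodule.span ℝ ((fun j => gradient (q j) y) '' ↑(E ∪ J₀ ∪ {i}))) = J₀.card :=
      hrankx i hi y hy1
    have h2 : Module.finrank ℝ
        (Submodule.span ℝ ((fun j => gradient (q j) y) '' ↑J₀)) = J₀.card := by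
      rw [finset_image_coe_eq_range, finrank_span_eq_card hy2, Fintype.card_coe]
    have heq2 := Submodule.eq_of_le_of_finrank_le hle (by rw [h1, h2])
    rw [heq2]
    exact Submodule.subset_span ⟨i, by simp, rfl⟩
  -- implicit function construction
  set Tf : (ℝ × (J₀ → ℝ)) →L[ℝ] EuclideanSpace ℝ (Fin n) :=
    ∑ j : J₀, (((ContinuousLinearMap.proj j).comp
      (ContinuousLinearMap.snd ℝ ℝ (J₀ → ℝ))).smulRight (g ↑j)) with hTf
  have hTfapp : ∀ p : ℝ × (J₀ → ℝ), Tf p = ∑ j : J₀, p.2 j • g ↑j := by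
    intro p
    rw [hTf, ContinuousLinearMap.sum_apply]
    refine Finset.sum_congr rfl fun j _ => ?_
    simp
  set L : (ℝ × (J₀ → ℝ)) →L[ℝ] EuclideanSpace ℝ (Fin n) :=
    (ContinuousLinearMap.fst ℝ ℝ (J₀ → ℝ)).smulRight v + Tf with hL
  have hLapp : ∀ p : ℝ × (J₀ → ℝ), L p = p.1 • v + Tf p := by
    intro p; rw [hL]; simp
  set Am : ℝ × (J₀ → ℝ) → EuclideanSpace ℝ (Fin n) := fun p => x + L p with hAm
  have hAmf : ∀ p, HasFDerivAt Am L p := fun p => (L.hasFDerivAt).const_add x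
  have hAmcd : ContDiff ℝ 2 Am := contDiff_const.add L.contDiff
  have hAm00 : Am ((0 : ℝ), (0 : J₀ → ℝ)) = x := by
    rw [hAm]
    simp only [hLapp, hTfapp]
    simp
  set Qm : EuclideanSpace ℝ (Fin n) → (J₀ → ℝ) := fun y j => q ↑j y with hQm
  have hQmcd : ContDiff ℝ 2 Qm := contDiff_pi.2 fun j => hq ↑j
  set G : ℝ × (J₀ → ℝ) → ℝ × (J₀ → ℝ) := fun p => (p.1, Qm (Am p)) with hGdef
  have hGcd : ContDiff ℝ 2 G := contDiff_fst.prodMk (hQmcd.comp hAmcd)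
  set Ml : (J₀ → ℝ) →ₗ[ℝ] (J₀ → ℝ) :=
    { toFun := fun b j => ⟪g ↑j, ∑ k : J₀, b k • g ↑k⟫
      map_add' := by
        intro b b'; funext j
        have hsum : ∑ k : J₀, (b + b') k • g ↑k
            = (∑ k : J₀, b k • g ↑k) + ∑ k : J₀, b' k • g ↑k := by
          rw [← Finset.sum_add_distrib]
          refine Finset.sum_congr rfl fun k _ => ?_
          simp [add_smul]
        show ⟪g ↑j, ∑ k : J₀, (b + b') k • g ↑k⟫ = _
        rw [hsum, inner_add_right]
        rfl
      map_smul' := by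
        intro cc b; funext j
        have hsum : ∑ k : J₀, (cc • b) k • g ↑k = cc • ∑ k : J₀, b k • g ↑k := by
          rw [Finset.smul_sum]
          refine Finset.sum_congr rfl fun k _ => ?_
          simp [smul_smul]
        show ⟪g ↑j, ∑ k : J₀, (cc • b) k • g ↑k⟫ = _
        rw [hsum, real_inner_smul_right]
        rfl } with hMl
  have hMlker : ∀ b, Ml b = 0 → b = 0 := by
    intro b hb
    have hw : ∀ j : J₀, ⟪g ↑j, ∑ k : J₀, b k • g ↑k⟫ = 0 := fun j => congrFun hb j
    have hww : ⟪∑ k : J₀, b k • g ↑k, ∑ k : J₀, b k • g ↑k⟫ = (0:ℝ) := by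
      rw [sum_inner]
      refine Finset.sum_eq_zero fun k _ => ?_
      rw [real_inner_smul_left, hw k, mul_zero]
    have hzero : ∑ k : J₀, b k • g ↑k = 0 := inner_self_eq_zero.1 hww
    have hb0 := Fintype.linearIndependent_iff.1 hJind b hzero
    funext j; exact hb0 j
  have hMlinj : Function.Injective Ml := by
    intro b1 b2 h
    have := hMlker (b1 - b2) (by rw [map_sub, h, sub_self])
    exact sub_eq_zero.1 this
  set Me : (J₀ → ℝ) ≃L[ℝ] (J₀ → ℝ) :=
    (Ml.linearEquivOfInjective hMlinj rfl).toContinuousLinearEquiv with hMe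
  set e : (ℝ × (J₀ → ℝ)) ≃L[ℝ] (ℝ × (J₀ → ℝ)) :=
    (ContinuousLinearEquiv.refl ℝ ℝ).prodCongr Me with he
  have hQf : HasFDerivAt Qm (ContinuousLinearMap.pi fun j : J₀ => fderiv ℝ (q ↑j) x) x :=
    hasFDerivAt_pi.2 fun j => (((hq ↑j).differentiable two_ne_zero) x).hasFDerivAt
  have hGf0 : HasFDerivAt G ((ContinuousLinearMap.fst ℝ ℝ (J₀ → ℝ)).prod
      ((ContinuousLinearMap.pi fun j : J₀ => fderiv ℝ (q ↑j) x).comp L)) ((0:ℝ), (0 : J₀ → ℝ)) := by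
    refine (hasFDerivAt_fst).prodMk ?_
    have hQf' : HasFDerivAt Qm (ContinuousLinearMap.pi fun j : J₀ => fderiv ℝ (q ↑j) x)
        (Am ((0:ℝ), (0 : J₀ → ℝ))) := hAm00 ▸ hQf
    exact hQf'.comp _ (hAmf _)
  have heqe : ((ContinuousLinearMap.fst ℝ ℝ (J₀ → ℝ)).prod
      ((ContinuousLinearMap.pi fun j : J₀ => fderiv ℝ (q ↑j) x).comp L))
      = (e : (ℝ × (J₀ → ℝ)) →L[ℝ] (ℝ × (J₀ → ℝ))) := by
    apply ContinuousLinearMap.ext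
    intro p
    have h2 : ∀ j : J₀, fderiv ℝ (q ↑j) x (L p) = Ml p.2 j := by
      intro j
      rw [fderiv_eq_inner_gradient, hLapp, hTfapp]
      show ⟪g ↑j, p.1 • v + ∑ k : J₀, p.2 k • g ↑k⟫ = Ml p.2 j
      rw [inner_add_right, real_inner_smul_right, hvS ↑j (hJS j.2), mul_zero, zero_add]
      rfl
    apply Prod.ext
    · rfl
    · funext j
      exact h2 j
  have hGcdAt : ContDiffAt ℝ 2 G ((0:ℝ), (0 : J₀ → ℝ)) := hGcd.contDiffAt
  have hGf : HasFDerivAt G (e : (ℝ × (J₀ → ℝ)) →L[ℝ] (ℝ × (J₀ → ℝ)))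
      ((0:ℝ), (0 : J₀ → ℝ)) := heqe ▸ hGf0
  have h12 : (2 : WithTop ℕ∞) ≠ 0 := two_ne_zero
  have hGstrict : HasStrictFDerivAt G (e : (ℝ × (J₀ → ℝ)) →L[ℝ] (ℝ × (J₀ → ℝ)))
      ((0:ℝ), (0 : J₀ → ℝ)) := hGcdAt.hasStrictFDerivAt' hGf h12
  have h00 : G ((0:ℝ), (0 : J₀ → ℝ)) = ((0:ℝ), (0 : J₀ → ℝ)) := by
    have hQx : Qm x = 0 := funext fun j => hq0 ↑j (hJS j.2)
    rw [hGdef]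
    simp only [hAm00, hQx]
  set inv : ℝ × (J₀ → ℝ) → ℝ × (J₀ → ℝ) := hGcdAt.localInverse hGf h12 with hinvdef
  have hinvcd : ContDiffAt ℝ 2 inv ((0:ℝ), (0 : J₀ → ℝ)) :=
    h00 ▸ hGcdAt.to_localInverse hGf h12
  have hinv00 : inv ((0:ℝ), (0 : J₀ → ℝ)) = ((0:ℝ), (0 : J₀ → ℝ)) := by
    have := hGcdAt.localInverse_apply_image hGf h12
    rw [h00] at this; exact this
  have hrinv : ∀ᶠ p in 𝓝 ((0:ℝ), (0 : J₀ → ℝ)), G (inv p) = p := by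
    have := hGstrict.eventually_right_inverse
    rw [h00] at this
    exact this
  have hinvf : HasFDerivAt inv ((e.symm : (ℝ × (J₀ → ℝ)) →L[ℝ] (ℝ × (J₀ → ℝ))))
      ((0:ℝ), (0 : J₀ → ℝ)) := by
    have := hGstrict.to_localInverse
    rw [h00] at this
    exact this.hasFDerivAt
  set a : ℝ → ℝ × (J₀ → ℝ) := fun t => inv (t, 0) with hadef
  set c : ℝ → EuclideanSpace ℝ (Fin n) := fun t => Am (a t) with hcdef
  have hc0 : c 0 = x := by
    show Am (inv ((0:ℝ), (0 : J₀ → ℝ))) = x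
    rw [hinv00, hAm00]
  have htcd : ContDiffAt ℝ 2 (fun t : ℝ => ((t, 0) : ℝ × (J₀ → ℝ))) 0 :=
    (contDiff_id.prodMk contDiff_const).contDiffAt
  have hacd : ContDiffAt ℝ 2 a 0 :=
    ContDiffAt.comp (g := inv) (f := fun t : ℝ => ((t, 0) : ℝ × (J₀ → ℝ))) 0 hinvcd htcd
  have hccd : ContDiffAt ℝ 2 c 0 := hAmcd.contDiffAt.comp 0 hacd
  have htf : HasFDerivAt (fun t : ℝ => ((t, 0) : ℝ × (J₀ → ℝ)))
      ((ContinuousLinearMap.id ℝ ℝ).prod 0) 0 :=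
    (hasFDerivAt_id 0).prodMk (hasFDerivAt_const 0 0)
  have hafd : HasFDerivAt a ((e.symm : (ℝ × (J₀ → ℝ)) →L[ℝ] (ℝ × (J₀ → ℝ))).comp
      ((ContinuousLinearMap.id ℝ ℝ).prod 0)) 0 :=
    HasFDerivAt.comp (g := inv) (f := fun t : ℝ => ((t, 0) : ℝ × (J₀ → ℝ))) 0 hinvf htf
  have hcfd : HasFDerivAt c (L.comp ((e.symm : (ℝ × (J₀ → ℝ)) →L[ℝ] (ℝ × (J₀ → ℝ))).comp
      ((ContinuousLinearMap.id ℝ ℝ).prod 0))) 0 := (hAmf (a 0)).comp 0 hafd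
  have hesymm : e.symm ((1:ℝ), (0 : J₀ → ℝ)) = ((1:ℝ), (0 : J₀ → ℝ)) := by
    rw [ContinuousLinearEquiv.symm_apply_eq, he]
    have : Me (0 : J₀ → ℝ) = 0 := map_zero Me
    simp [this]
  have hder : HasDerivAt c v 0 := by
    have hval : (L.comp ((e.symm : (ℝ × (J₀ → ℝ)) →L[ℝ] (ℝ × (J₀ → ℝ))).comp
        ((ContinuousLinearMap.id ℝ ℝ).prod 0))) 1 = v := by
      have h1 : ((ContinuousLinearMap.id ℝ ℝ).prod (0 : ℝ →L[ℝ] (J₀ → ℝ))) 1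
          = ((1:ℝ), (0 : J₀ → ℝ)) := rfl
      rw [ContinuousLinearMap.comp_apply, ContinuousLinearMap.comp_apply, h1,
        ContinuousLinearEquiv.coe_coe, hesymm, hLapp, hTfapp]
      simp
    exact hval ▸ hcfd.hasDerivAt
  have htend : Tendsto (fun t : ℝ => ((t, 0) : ℝ × (J₀ → ℝ))) (𝓝 0)
      (𝓝 ((0:ℝ), (0 : J₀ → ℝ))) :=
    (continuous_id.prodMk continuous_const).continuousAt
  have hevq : ∀ᶠ t in 𝓝 (0:ℝ), ∀ j : J₀, q ↑j (c t) = 0 := by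
    filter_upwards [htend.eventually hrinv] with t ht j
    have h1 := congrArg Prod.snd ht
    have h2 : Qm (Am (a t)) = 0 := h1
    exact congrFun h2 j
  have hevmem : ∀ᶠ t in 𝓝 (0:ℝ), c t ∈ interior U₀ ∧ c t ∈ Vind := by
    have hcont : ContinuousAt c 0 := hccd.continuousAt
    have hmem : (interior U₀ ∩ Vind) ∈ 𝓝 (c 0) := by
      rw [hc0]; exact (isOpen_interior.inter hVopen).mem_nhds ⟨hxU, hxVind⟩
    filter_upwards [hcont.preimage_mem_nhds hmem] with t ht
    exact ⟨ht.1, ht.2⟩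
  obtain ⟨u, hu, hucd⟩ := hccd.contDiffOn (le_refl 2) (by simp)
  obtain ⟨u', hu'sub, hu'open, hu'mem⟩ := _root_.mem_nhds_iff.1 hu
  have hucd' : ContDiffOn ℝ 2 c u' := hucd.mono hu'sub
  have hall : ∀ᶠ t in 𝓝 (0:ℝ),
      ((∀ j : J₀, q ↑j (c t) = 0) ∧ (c t ∈ interior U₀ ∧ c t ∈ Vind)) ∧ t ∈ u' :=
    (hevq.and hevmem).and (hu'open.mem_nhds hu'mem)
  obtain ⟨tb, htb, hball⟩ := Metric.mem_nhds_iff.1 hall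
  have hIoo : Set.Ioo (-tb) tb ⊆ Metric.ball (0:ℝ) tb := by
    rw [Real.ball_eq_Ioo]
    intro s hs
    constructor
    · linarith [hs.1]
    · linarith [hs.2]
  have hprops : ∀ s ∈ Set.Ioo (-tb) tb,
      ((∀ j : J₀, q ↑j (c s) = 0) ∧ (c s ∈ interior U₀ ∧ c s ∈ Vind)) ∧ s ∈ u' :=
    fun s hs => hball (hIoo hs)
  refine ⟨tb, htb, c, ?_, hc0, hder, ?_⟩
  · refine (hucd'.of_le one_le_two).mono ?_
    intro s hs
    exact (hprops s hs).2
  · intro t ht i hi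
    have hiS : i ∈ S := (hmemS i).1 hi
    have hderiv0 : ∀ s ∈ Set.Ioo (-tb) tb, HasDerivAt (fun r => q i (c r)) 0 s := by
      intro s hs
      have hcD : DifferentiableAt ℝ c s :=
        ((hucd'.differentiableOn two_ne_zero) s (hprops s hs).2).differentiableAt
          (hu'open.mem_nhds (hprops s hs).2)
      have hcw : HasDerivAt c (deriv c s) s := hcD.hasDerivAt
      have hj0 : ∀ j : J₀, ⟪gradient (q ↑j) (c s), deriv c s⟫ = 0 := by
        intro j
        have h1 : HasDerivAt (fun r => q ↑j (c r)) (fderiv ℝ (q ↑j) (c s) (deriv c s)) s :=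
          ((((hq ↑j).differentiable two_ne_zero) (c s)).hasFDerivAt).comp_hasDerivAt s hcw
        have hev : (fun r => q ↑j (c r)) =ᶠ[𝓝 s] fun _ => (0:ℝ) := by
          filter_upwards [isOpen_Ioo.mem_nhds hs] with r hr
          exact (hprops r hr).1.1 j
        have h2 : HasDerivAt (fun r => q ↑j (c r)) 0 s :=
          (hasDerivAt_const s (0:ℝ)).congr_of_eventuallyEq hev
        have h3 := h2.unique h1
        rw [fderiv_eq_inner_gradient] at h3
        exact h3.symm
      have hspan := hkey (c s) (interior_subset (hprops s hs).1.2.1) (hprops s hs).1.2.2 i hiS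
      have hinner : ⟪gradient (q i) (c s), deriv c s⟫ = 0 := by
        refine Submodule.span_induction
          (p := fun z _ => ⟪z, deriv c s⟫ = 0) ?_ ?_ ?_ ?_ hspan
        · rintro z ⟨j, hj, rfl⟩
          exact hj0 ⟨j, hj⟩
        · exact inner_zero_left _
        · intro z1 z2 _ _ hz1 hz2; rw [inner_add_left, hz1, hz2, add_zero]
        · intro r z _ hz; rw [real_inner_smul_left, hz, mul_zero]
      have h1 : HasDerivAt (fun r => q i (c r)) (fderiv ℝ (q i) (c s) (deriv c s)) s :=
        ((((hq i).differentiable two_ne_zero) (c s)).hasFDerivAt).comp_hasDerivAt s hcw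
      rw [fderiv_eq_inner_gradient, hinner] at h1
      exact h1
    have h0mem : (0:ℝ) ∈ Set.Ioo (-tb) tb := ⟨by linarith, htb⟩
    have hbound := Convex.norm_image_sub_le_of_norm_hasDerivWithin_le
      (f := fun r => q i (c r)) (f' := fun _ => (0:ℝ)) (C := 0)
      (fun s hs => (hderiv0 s hs).hasDerivWithinAt)
      (fun s _ => by simp) (convex_Ioo _ _) h0mem ht
    rw [zero_mul] at hbound
    have heq0 : q i (c t) = q i (c 0) := by
      have := norm_le_zero_iff.1 hbound
      exact sub_eq_zero.1 this
    rw [heq0, hc0]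
    exact hq0 i hiS


end
end

section
/- (Lemma 3.1) Let MSCQ hold at x ∈ Γ and let x* ∈ ℝⁿ with Λ(x, x*) ≠ ∅. Assume that Λ(x, x*; v₁) = Λ(x, x*; v₂) whenever v₁, v₂ ∈ K(x, x*) ∖ {0}. Then for every v ∈ K(x, x*) and all λ¹, λ² ∈ Λ(x, x*; v): ∇²⟨λ¹ − λ², q⟩(x) v ∈ span{∇q_i(x) : i ∈ E ∪ I⁺(x, x*)}. -/
open Filter Topology Metric Set
open scoped RealInnerProductSpace

noncomputable section

variable {n : ℕ} {ι : Type*} [Fintype ι] [DecidableEq ι]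

/-! ### Auxiliary lemmas -/

lemma slope_tendsto_aux {E : Type*} [NormedAddCommGroup E] [NormedSpace ℝ E]
    {f : E → ℝ} {f' : E →L[ℝ] ℝ} {x : E} (hf : HasFDerivAt f f' x)
    {t : ℕ → ℝ} {c : ℕ → E} {v : E} (ht : ∀ k, 0 < t k) (ht0 : Tendsto t atTop (𝓝 0))
    (hc : Tendsto c atTop (𝓝 v)) :
    Tendsto (fun k => (f (x + t k • c k) - f x) / t k) atTop (𝓝 (f' v)) := by
  have hh : Tendsto (fun k => t k • c k) atTop (𝓝 0) := by
    simpa using ht0.smul hc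
  have hlo := (hasFDerivAt_iff_isLittleO_nhds_zero.1 hf).comp_tendsto hh
  have hO : (fun k => t k • c k) =O[atTop] (fun k => t k) := by
    have hC : ∀ᶠ k in atTop, ‖c k‖ ≤ ‖v‖ + 1 :=
      (hc.norm.eventually_lt_const (by linarith [norm_nonneg v])).mono fun k hk => hk.le
    refine Asymptotics.isBigO_iff.2 ⟨‖v‖ + 1, ?_⟩
    filter_upwards [hC] with k hk
    rw [norm_smul]
    calc ‖t k‖ * ‖c k‖ ≤ ‖t k‖ * (‖v‖ + 1) :=
          mul_le_mul_of_nonneg_left (hk) (norm_nonneg _)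
      _ = (‖v‖ + 1) * ‖t k‖ := mul_comm _ _
  have hlo2 := (hlo.trans_isBigO hO).tendsto_div_nhds_zero
  have h1 : Tendsto (fun k => f' (c k)) atTop (𝓝 (f' v)) := (f'.continuous.tendsto v).comp hc
  have h2 : Tendsto (fun k => (f (x + t k • c k) - f x - f' (t k • c k)) / t k + f' (c k)) atTop
      (𝓝 (0 + f' v)) := hlo2.add h1
  rw [zero_add] at h2
  refine h2.congr fun k => ?_
  have htk := (ht k).ne'
  rw [f'.map_smul]
  field_simp
  ring

lemma inner_gradient_eq' (f : EuclideanSpace ℝ (Fin n) → ℝ) (x u : EuclideanSpace ℝ (Fin n)) :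
    ⟪gradient f x, u⟫ = fderiv ℝ f x u :=
  InnerProductSpace.toDual_symm_apply

lemma hessApp_eq (f : EuclideanSpace ℝ (Fin n) → ℝ) (x w : EuclideanSpace ℝ (Fin n)) :
    HessApp f x w = (InnerProductSpace.toDual ℝ _).symm (fderiv ℝ (fderiv ℝ f) x w) := by
  have h : (fun y => gradient f y) =
      ((InnerProductSpace.toDual ℝ (EuclideanSpace ℝ (Fin n))).symm) ∘ (fderiv ℝ f) := rfl
  rw [HessApp, h, LinearIsometryEquiv.comp_fderiv]
  rfl

lemma inner_hessApp_symm {f : EuclideanSpace ℝ (Fin n) → ℝ} (hf : ContDiff ℝ 2 f)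
    (x a b : EuclideanSpace ℝ (Fin n)) :
    ⟪HessApp f x a, b⟫ = ⟪HessApp f x b, a⟫ := by
  rw [hessApp_eq, hessApp_eq, InnerProductSpace.toDual_symm_apply,
    InnerProductSpace.toDual_symm_apply]
  exact (hf.contDiffAt.isSymmSndFDerivAt (by norm_num)) a b

lemma euclid_tendsto_coords {ι' : Type*} [Fintype ι'] {f : ℕ → EuclideanSpace ℝ ι'}
    (h : ∀ i, Tendsto (fun k => f k i) atTop (𝓝 0)) : Tendsto f atTop (𝓝 0) := by
  have h2 : Tendsto (fun k => (fun i => f k i : ∀ _ : ι', ℝ)) atTop (𝓝 0) := by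
    rw [tendsto_pi_nhds]; intro i; simpa using h i
  have h3 := ((EuclideanSpace.equiv ι' ℝ).symm.continuous.tendsto 0).comp h2
  exact h3

lemma klin_subset_bcone (E I : Finset ι) (hunion : E ∪ I = Finset.univ)
    (q : ι → EuclideanSpace ℝ (Fin n) → ℝ) (hq : ∀ i, ContDiff ℝ 2 (q i))
    (x : EuclideanSpace ℝ (Fin n)) (hfeas : x ∈ Feas E I q)
    (hmscq : ∃ κ > (0:ℝ), MSCQat E I q x κ)
    (u : EuclideanSpace ℝ (Fin n))
    (hE : ∀ i ∈ E, ⟪gradient (q i) x, u⟫ = 0)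
    (hA : ∀ i ∈ ActiveI I q x, ⟪gradient (q i) x, u⟫ ≤ 0) :
    u ∈ BCone (Feas E I q) x := by
  obtain ⟨κ, hκpos, U, hU, hUb⟩ := hmscq
  set t : ℕ → ℝ := fun k => 1 / (k + 1) with htdef
  have htpos : ∀ k, 0 < t k := fun k => by positivity
  have ht0 : Tendsto t atTop (𝓝 0) := tendsto_one_div_add_atTop_nhds_zero_nat
  set xk : ℕ → EuclideanSpace ℝ (Fin n) := fun k => x + t k • u with hxkdef
  have hxk : Tendsto xk atTop (𝓝 x) := by
    have hc : Tendsto (fun _ : ℕ => x) atTop (𝓝 x) := tendsto_const_nhds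
    simpa using hc.add (ht0.smul_const u)
  have hslope : ∀ i, Tendsto (fun k => (q i (xk k) - q i x) / t k) atTop
      (𝓝 ⟪gradient (q i) x, u⟫) := by
    intro i
    rw [inner_gradient_eq']
    exact slope_tendsto_aux (((hq i).differentiable (by norm_num)) x).hasFDerivAt htpos ht0
      tendsto_const_nhds
  set θ : ℕ → EuclideanSpace ℝ ι := fun k => WithLp.toLp 2 (fun i => if i ∈ E then 0 else min (q i (xk k)) 0)
    with hθdef
  have hθ : ∀ k, θ k ∈ Theta E I := by
    intro k
    constructor
    · intro i hi; simp [hθdef, hi]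
    · intro i hi
      by_cases h : i ∈ E <;> simp [hθdef, h, min_le_right]
  set w : ℕ → EuclideanSpace ℝ ι := fun k => WithLp.toLp 2 (fun i => q i (xk k) - θ k i) with hwdef
  have hw : Tendsto (fun k => (t k)⁻¹ • w k) atTop (𝓝 0) := by
    apply euclid_tendsto_coords
    intro i
    have hcont : Tendsto (fun k => q i (xk k)) atTop (𝓝 (q i x)) :=
      ((hq i).continuous.tendsto x).comp hxk
    have hcoord : ∀ k, ((t k)⁻¹ • w k) i = (t k)⁻¹ * (q i (xk k) - θ k i) := fun k => rfl
    simp only [hcoord]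
    by_cases hiE : i ∈ E
    · have hqx : q i x = 0 := hfeas.1 i hiE
      have heq : ∀ k, (t k)⁻¹ * (q i (xk k) - θ k i) = (q i (xk k) - q i x) / t k := by
        intro k; simp [hθdef, hiE, hqx, div_eq_inv_mul]
      rw [show (0:ℝ) = ⟪gradient (q i) x, u⟫ from (hE i hiE).symm]
      exact (hslope i).congr fun k => (heq k).symm
    · have hiI : i ∈ I := by
        have hm := Finset.mem_univ i; rw [← hunion, Finset.mem_union] at hm; tauto
      by_cases hact : q i x = 0
      · have hAi : ⟪gradient (q i) x, u⟫ ≤ 0 :=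
          hA i (by simp [ActiveI, hiI, hact])
        have heq : ∀ k, (t k)⁻¹ * (q i (xk k) - θ k i) = max ((q i (xk k) - q i x) / t k) 0 := by
          intro k
          have h1 : q i (xk k) - θ k i = max (q i (xk k)) 0 := by
            simp only [hθdef, hiE, if_neg]
            rcases le_total (q i (xk k)) 0 with h | h <;>
              simp [min_eq_left, min_eq_right, max_eq_left, max_eq_right, h]
          rw [h1, hact, sub_zero, div_eq_inv_mul]
          rcases le_total (q i (xk k)) 0 with h | h
          · rw [max_eq_right h, max_eq_right (by
              have := (htpos k); nlinarith [inv_pos.2 this]), mul_zero]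
          · rw [max_eq_left h, max_eq_left (by positivity)]
        have hc0 : Tendsto (fun _ : ℕ => (0:ℝ)) atTop (𝓝 0) := tendsto_const_nhds
        have hmax := (hslope i).max hc0
        rw [max_eq_right hAi] at hmax
        exact hmax.congr fun k => (heq k).symm
      · have hqneg : q i x < 0 := lt_of_le_of_ne (hfeas.2 i hiI) hact
        have hev : ∀ᶠ k in atTop, q i (xk k) < 0 := hcont.eventually_lt_const hqneg
        have hev2 : ∀ᶠ k in atTop, (t k)⁻¹ * (q i (xk k) - θ k i) = 0 := by
          filter_upwards [hev] with k hk
          simp [hθdef, hiE, min_eq_left hk.le]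
        exact Tendsto.congr' (hev2.mono fun k hk => hk.symm) tendsto_const_nhds
  set d : ℕ → ℝ := fun k => Metric.infDist (xk k) (Feas E I q) with hddef
  have hdist : ∀ k, Metric.infDist (show EuclideanSpace ℝ ι from WithLp.toLp 2 fun i => q i (xk k))
      (Theta E I) ≤ ‖w k‖ := by
    intro k
    have h := Metric.infDist_le_dist_of_mem
      (x := show EuclideanSpace ℝ ι from WithLp.toLp 2 fun i => q i (xk k)) (hθ k)
    rwa [dist_eq_norm,
      show (show EuclideanSpace ℝ ι from WithLp.toLp 2 fun i => q i (xk k)) - θ k = w k from rfl] at h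
  have hdt : Tendsto (fun k => d k / t k) atTop (𝓝 0) := by
    have hub : ∀ᶠ k in atTop, d k / t k ≤ κ * ‖(t k)⁻¹ • w k‖ := by
      filter_upwards [hxk.eventually_mem hU] with k hk
      have h1 : d k ≤ κ * ‖w k‖ := le_trans (hUb _ hk)
        (mul_le_mul_of_nonneg_left (hdist k) hκpos.le)
      rw [norm_smul, norm_inv, Real.norm_eq_abs, abs_of_pos (htpos k), div_eq_inv_mul]
      calc (t k)⁻¹ * d k ≤ (t k)⁻¹ * (κ * ‖w k‖) :=
            mul_le_mul_of_nonneg_left h1 (inv_pos.2 (htpos k)).le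
        _ = κ * ((t k)⁻¹ * ‖w k‖) := by ring
    have hlb : ∀ᶠ k in atTop, 0 ≤ d k / t k :=
      Eventually.of_forall fun k => div_nonneg Metric.infDist_nonneg (htpos k).le
    have hκw : Tendsto (fun k => κ * ‖(t k)⁻¹ • w k‖) atTop (𝓝 0) := by
      simpa using (hw.norm).const_mul κ
    exact squeeze_zero' hlb hub hκw
  have hchoose : ∀ k, ∃ y ∈ Feas E I q, dist (xk k) y < d k + t k * t k := by
    intro k
    rw [← Metric.infDist_lt_iff ⟨x, hfeas⟩]
    exact lt_add_of_pos_right _ (by nlinarith [htpos k])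
  choose y hyF hyd using hchoose
  refine ⟨t, fun k => (t k)⁻¹ • (y k - x), htpos, ht0, ?_, ?_⟩
  · rw [tendsto_iff_norm_sub_tendsto_zero]
    have hbound : ∀ k, ‖(t k)⁻¹ • (y k - x) - u‖ ≤ d k / t k + t k := by
      intro k
      have hxkk : y k - xk k = (y k - x) - t k • u := by
        simp only [hxkdef]; abel
      have h1 : (t k)⁻¹ • (y k - xk k) = (t k)⁻¹ • (y k - x) - u := by
        rw [hxkk, smul_sub, smul_smul, inv_mul_cancel₀ (htpos k).ne', one_smul]
      rw [← h1, norm_smul, norm_inv, Real.norm_eq_abs, abs_of_pos (htpos k)]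
      have h2 : ‖y k - xk k‖ ≤ d k + t k * t k := by
        have h3 := (hyd k).le
        rwa [dist_eq_norm, norm_sub_rev] at h3
      calc (t k)⁻¹ * ‖y k - xk k‖ ≤ (t k)⁻¹ * (d k + t k * t k) :=
            mul_le_mul_of_nonneg_left h2 (inv_pos.2 (htpos k)).le
        _ = d k / t k + t k := by rw [div_eq_inv_mul]; field_simp
    have hlim : Tendsto (fun k => d k / t k + t k) atTop (𝓝 0) := by
      simpa using hdt.add ht0
    exact squeeze_zero (fun k => norm_nonneg _) hbound hlim
  · intro k
    have h4 : t k • (t k)⁻¹ • (y k - x) = y k - x := by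
      rw [smul_smul, mul_inv_cancel₀ (htpos k).ne', one_smul]
    rw [h4]
    simpa using hyF k

lemma bcone_deriv (E I : Finset ι)
    (q : ι → EuclideanSpace ℝ (Fin n) → ℝ) (hq : ∀ i, ContDiff ℝ 2 (q i))
    (x : EuclideanSpace ℝ (Fin n)) (hfeas : x ∈ Feas E I q)
    (v : EuclideanSpace ℝ (Fin n)) (hv : v ∈ BCone (Feas E I q) x) :
    (∀ i ∈ E, ⟪gradient (q i) x, v⟫ = 0) ∧
      ∀ i ∈ ActiveI I q x, ⟪gradient (q i) x, v⟫ ≤ 0 := by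
  obtain ⟨t, c, htpos, ht0, hc, hmem⟩ := hv
  have hslope : ∀ i, Tendsto (fun k => (q i (x + t k • c k) - q i x) / t k) atTop
      (𝓝 ⟪gradient (q i) x, v⟫) := by
    intro i
    rw [inner_gradient_eq']
    exact slope_tendsto_aux (((hq i).differentiable (by norm_num)) x).hasFDerivAt htpos ht0 hc
  constructor
  · intro i hi
    have hz : ∀ k, (q i (x + t k • c k) - q i x) / t k = 0 := by
      intro k
      rw [(hmem k).1 i hi, hfeas.1 i hi, sub_zero, zero_div]
    have h0 : Tendsto (fun k => (q i (x + t k • c k) - q i x) / t k) atTop (𝓝 0) := by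
      simp only [hz]; exact tendsto_const_nhds
    exact tendsto_nhds_unique (hslope i) h0
  · intro i hi
    rw [ActiveI, Finset.mem_filter] at hi
    refine le_of_tendsto (hslope i) (Eventually.of_forall fun k => ?_)
    apply div_nonpos_of_nonpos_of_nonneg _ (htpos k).le
    rw [hi.2, sub_zero]
    exact (hmem k).2 i hi.1

lemma hessComb_sub (q : ι → EuclideanSpace ℝ (Fin n) → ℝ) (a b : EuclideanSpace ℝ ι)
    (x w : EuclideanSpace ℝ (Fin n)) :
    HessComb q (a - b) x w = HessComb q a x w - HessComb q b x w := by
  simp only [HessComb]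
  rw [← Finset.sum_sub_distrib]
  refine Finset.sum_congr rfl fun i _ => ?_
  have : (a - b) i = a i - b i := rfl
  rw [this, sub_smul]

lemma hessComb_add_right (q : ι → EuclideanSpace ℝ (Fin n) → ℝ) (lam : EuclideanSpace ℝ ι)
    (x a b : EuclideanSpace ℝ (Fin n)) :
    HessComb q lam x (a + b) = HessComb q lam x a + HessComb q lam x b := by
  simp only [HessComb, HessApp, map_add, smul_add, Finset.sum_add_distrib]

lemma inner_hessComb_symm (q : ι → EuclideanSpace ℝ (Fin n) → ℝ) (hq : ∀ i, ContDiff ℝ 2 (q i))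
    (lam : EuclideanSpace ℝ ι) (x a b : EuclideanSpace ℝ (Fin n)) :
    ⟪a, HessComb q lam x b⟫ = ⟪b, HessComb q lam x a⟫ := by
  simp only [HessComb, inner_sum, real_inner_smul_right]
  refine Finset.sum_congr rfl fun i _ => ?_
  congr 1
  rw [real_inner_comm, inner_hessApp_symm (hq i) x b a, real_inner_comm]

lemma euclid_sum_apply {ι' α : Type*} [Fintype ι'] (s : Finset α)
    (f : α → EuclideanSpace ℝ ι') (j : ι') : (∑ a ∈ s, f a) j = ∑ a ∈ s, f a j := by
  induction s using Finset.cons_induction with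
  | empty => rfl
  | cons a s ha ih => rw [Finset.sum_cons, Finset.sum_cons, PiLp.add_apply, ih]

lemma iplusSet_mem_I {I : Finset ι} {q : ι → EuclideanSpace ℝ (Fin n) → ℝ}
    {x xs : EuclideanSpace ℝ (Fin n)} {i : ι} (h : i ∈ IplusSet I q x xs) : i ∈ I := by
  obtain ⟨lam, _, hf⟩ := h
  exact (Finset.mem_filter.1 hf).1

lemma iplusSet_mem_active {I : Finset ι} {q : ι → EuclideanSpace ℝ (Fin n) → ℝ}
    {x xs : EuclideanSpace ℝ (Fin n)} {i : ι} (h : i ∈ IplusSet I q x xs) :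
    i ∈ ActiveI I q x := by
  obtain ⟨lam, hlam, hf⟩ := h
  rw [IplusF, Finset.mem_filter] at hf
  have h2 := (hlam.2 i hf.1).2
  rcases mul_eq_zero.1 h2 with h3 | h3
  · exact absurd h3 hf.2.ne'
  · exact Finset.mem_filter.2 ⟨hf.1, h3⟩

lemma exists_lambar (I : Finset ι) (q : ι → EuclideanSpace ℝ (Fin n) → ℝ)
    (x xs : EuclideanSpace ℝ (Fin n)) (hne : (Mult I q x xs).Nonempty) :
    ∃ lb ∈ Mult I q x xs, ∀ i ∈ IplusSet I q x xs, 0 < lb i := by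
  classical
  obtain ⟨lam0, hlam0⟩ := hne
  set Tp : Finset ι := I.filter (fun i => i ∈ IplusSet I q x xs) with hTp
  have hex : ∀ i : ι, ∃ lam, lam ∈ Mult I q x xs ∧ (i ∈ Tp → 0 < lam i) := by
    intro i
    by_cases hi : i ∈ Tp
    · obtain ⟨lam, hlam, hf⟩ := (Finset.mem_filter.1 hi).2
      exact ⟨lam, hlam, fun _ => (Finset.mem_filter.1 hf).2⟩
    · exact ⟨lam0, hlam0, fun h => absurd h hi⟩
  choose lamW hlamWM hlamWpos using hex
  set N : ℝ := (Tp.card : ℝ) + 1 with hN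
  have hNpos : (0:ℝ) < N := by positivity
  set lb : EuclideanSpace ℝ ι := N⁻¹ • (lam0 + ∑ i ∈ Tp, lamW i) with hlb
  have hlbapp : ∀ j, lb j = N⁻¹ * (lam0 j + ∑ i ∈ Tp, lamW i j) := by
    intro j
    rw [hlb]
    have h2 : (N⁻¹ • (lam0 + ∑ i ∈ Tp, lamW i)) j
        = N⁻¹ * ((lam0 + ∑ i ∈ Tp, lamW i) j) := rfl
    rw [h2, show (lam0 + ∑ i ∈ Tp, lamW i) j = lam0 j + (∑ i ∈ Tp, lamW i) j from rfl,
      euclid_sum_apply]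
  refine ⟨lb, ⟨?_, ?_⟩, ?_⟩
  · -- sum condition
    have hterm : ∀ j, lb j • gradient (q j) x
        = N⁻¹ • (lam0 j • gradient (q j) x + ∑ i ∈ Tp, lamW i j • gradient (q j) x) := by
      intro j
      rw [hlbapp j, mul_smul, add_smul, Finset.sum_smul]
    rw [Finset.sum_congr rfl fun j _ => hterm j, ← Finset.smul_sum, Finset.sum_add_distrib,
      hlam0.1]
    have hswap : ∑ j, ∑ i ∈ Tp, lamW i j • gradient (q j) x
        = ∑ i ∈ Tp, ∑ j, lamW i j • gradient (q j) x := Finset.sum_comm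
    rw [hswap, Finset.sum_congr rfl (fun i (_ : i ∈ Tp) => (hlamWM i).1), Finset.sum_const]
    have hcast : xs + Tp.card • xs = N • xs := by
      rw [hN, ← Nat.cast_smul_eq_nsmul ℝ, add_smul, one_smul, add_comm]
    rw [hcast, smul_smul, inv_mul_cancel₀ hNpos.ne', one_smul]
  · intro i hi
    constructor
    · rw [hlbapp i]
      have h1 : 0 ≤ lam0 i := (hlam0.2 i hi).1
      have h2 : 0 ≤ ∑ k ∈ Tp, lamW k i :=
        Finset.sum_nonneg fun k _ => ((hlamWM k).2 i hi).1
      positivity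
    · rw [hlbapp i, mul_assoc, add_mul, Finset.sum_mul]
      have h1 : lam0 i * q i x = 0 := (hlam0.2 i hi).2
      have h2 : ∀ k ∈ Tp, lamW k i * q i x = 0 := fun k _ => ((hlamWM k).2 i hi).2
      rw [h1, Finset.sum_congr rfl h2, Finset.sum_const, smul_zero, add_zero, mul_zero]
  · intro i hip
    have hiTp : i ∈ Tp := Finset.mem_filter.2 ⟨iplusSet_mem_I hip, hip⟩
    rw [hlbapp i]
    have h1 : 0 ≤ lam0 i := (hlam0.2 i (iplusSet_mem_I hip)).1
    have h2 : lamW i i ≤ ∑ k ∈ Tp, lamW k i :=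
      Finset.single_le_sum (fun k _ => ((hlamWM k).2 i (iplusSet_mem_I hip)).1) hiTp
    have h3 : 0 < lamW i i := hlamWpos i hiTp
    have h4 : 0 < lam0 i + ∑ k ∈ Tp, lamW k i := by linarith
    positivity

lemma exists_neg_dir [Nonempty ι] (E I : Finset ι) (hdisj : Disjoint E I)
    (q : ι → EuclideanSpace ℝ (Fin n) → ℝ)
    (x xs : EuclideanSpace ℝ (Fin n)) (hne : (Mult I q x xs).Nonempty) :
    ∃ u0 : EuclideanSpace ℝ (Fin n),
      u0 ∈ (Submodule.span ℝ ((fun i => gradient (q i) x) ''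
        {i | i ∈ E ∨ i ∈ IplusSet I q x xs}))ᗮ ∧
      ∀ i ∈ ActiveI I q x, i ∉ IplusSet I q x xs → ⟪gradient (q i) x, u0⟫ < 0 := by
  classical
  set g : ι → EuclideanSpace ℝ (Fin n) := fun i => gradient (q i) x with hg
  set Tset : Set ι := {i | i ∈ E ∨ i ∈ IplusSet I q x xs} with hTset
  set L : Submodule ℝ (EuclideanSpace ℝ (Fin n)) := Submodule.span ℝ (g '' Tset) with hL
  set Atil : Finset ι := (ActiveI I q x).filter (fun i => i ∉ IplusSet I q x xs) with hAtil
  set p : ι → EuclideanSpace ℝ (Fin n) := fun i => (Lᗮ.orthogonalProjectionOnto (g i) : _) with hp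
  have hpLperp : ∀ i, p i ∈ Lᗮ := fun i => Submodule.coe_mem _
  have hgpL : ∀ i, g i - p i ∈ L := by
    intro i
    have h1 := Submodule.sub_starProjection_mem_orthogonal (K := Lᗮ) (g i)
    rwa [Submodule.orthogonal_orthogonal] at h1
  by_cases h0 : (0 : EuclideanSpace ℝ (Fin n)) ∈ convexHull ℝ (p '' (Atil : Set ι))
  · -- contradiction case
    exfalso
    rw [convexHull_eq] at h0
    obtain ⟨ι'', tF, wF, zF, hw0, hw1, hzS, hcm⟩ := h0
    rw [Finset.centerMass_eq_of_sum_1 _ _ hw1] at hcm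
    set rep : ι'' → ι := fun a =>
      if h : ∃ j ∈ Atil, p j = zF a then h.choose else Classical.arbitrary ι with hrepdef
    have hrep : ∀ a ∈ tF, rep a ∈ Atil ∧ p (rep a) = zF a := by
      intro a ha
      obtain ⟨j, hj, hje⟩ := hzS a ha
      have hex : ∃ j ∈ Atil, p j = zF a := ⟨j, by simpa using hj, hje⟩
      rw [hrepdef]
      simp only [dif_pos hex]
      exact ⟨hex.choose_spec.1, hex.choose_spec.2⟩
    set μ : EuclideanSpace ℝ ι :=
      WithLp.toLp 2 (fun i => ∑ a ∈ tF.filter (fun a => rep a = i), wF a) with hμdef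
    have hμ0 : ∀ i, 0 ≤ μ i :=
      fun i => Finset.sum_nonneg fun a ha => hw0 a (Finset.mem_filter.1 ha).1
    have hμsupp : ∀ i, μ i ≠ 0 → i ∈ Atil := by
      intro i h
      obtain ⟨a, ha, -⟩ := Finset.exists_ne_zero_of_sum_ne_zero h
      obtain ⟨haF, hae⟩ := Finset.mem_filter.1 ha
      exact hae ▸ (hrep a haF).1
    have hμg : ∑ i, μ i • g i = ∑ a ∈ tF, wF a • g (rep a) := by
      rw [← Finset.sum_fiberwise_of_maps_to (fun a _ => Finset.mem_univ (rep a))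
        (fun a => wF a • g (rep a))]
      refine Finset.sum_congr rfl fun i _ => ?_
      rw [hμdef, Finset.sum_smul]
      exact Finset.sum_congr rfl fun a ha => by rw [(Finset.mem_filter.1 ha).2]
    have hyL : ∑ i, μ i • g i ∈ L := by
      rw [hμg]
      have hdecomp : ∑ a ∈ tF, wF a • g (rep a)
          = ∑ a ∈ tF, wF a • (g (rep a) - p (rep a)) + ∑ a ∈ tF, wF a • zF a := by
        rw [← Finset.sum_add_distrib]
        refine Finset.sum_congr rfl fun a ha => ?_
        rw [smul_sub, (hrep a ha).2]
        abel
      rw [hdecomp, hcm, add_zero]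
      exact Submodule.sum_mem _ fun a _ => Submodule.smul_mem _ _ (hgpL (rep a))
    obtain ⟨l, hlsupp, hleq⟩ := (Finsupp.mem_span_image_iff_linearCombination ℝ).1 hyL
    rw [Finsupp.linearCombination_apply,
      Finsupp.sum_fintype l (fun i a => a • g i) (fun i => zero_smul ℝ (g i))] at hleq
    have hcsupp : ∀ i, i ∉ Tset → l i = 0 := by
      intro i hi
      by_contra h
      exact hi (hlsupp (Finsupp.mem_support_iff.2 h))
    obtain ⟨lb, hlbM, hlbpos⟩ := exists_lambar I q x xs hne
    set S : Finset ι := I.filter (fun i => i ∈ IplusSet I q x xs) with hS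
    have hεex : ∃ ε : ℝ, 0 < ε ∧ ∀ i ∈ S, ε * |l i| ≤ lb i := by
      rcases Finset.eq_empty_or_nonempty S with hSe | hSne
      · exact ⟨1, one_pos, fun i hi => by rw [hSe] at hi; exact absurd hi (Finset.notMem_empty i)⟩
      · refine ⟨S.inf' hSne (fun i => lb i / (|l i| + 1)), ?_, ?_⟩
        · rw [Finset.lt_inf'_iff]
          intro i hi
          have := hlbpos i (Finset.mem_filter.1 hi).2
          positivity
        · intro i hi
          have h5 := Finset.inf'_le (fun i => lb i / (|l i| + 1)) hi
          have hlbi := hlbpos i (Finset.mem_filter.1 hi).2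
          have h6 : (0:ℝ) < |l i| + 1 := by positivity
          calc S.inf' hSne (fun i => lb i / (|l i| + 1)) * |l i|
              ≤ (lb i / (|l i| + 1)) * |l i| :=
                mul_le_mul_of_nonneg_right h5 (abs_nonneg _)
            _ ≤ (lb i / (|l i| + 1)) * (|l i| + 1) :=
                mul_le_mul_of_nonneg_left (by linarith) (by positivity)
            _ = lb i := div_mul_cancel₀ _ h6.ne'
    obtain ⟨ε, hεpos, hεle⟩ := hεex
    set lam' : EuclideanSpace ℝ ι := WithLp.toLp 2 (fun i => lb i + ε * (μ i - l i)) with hlam'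
    have hIplusActive : ∀ i, i ∈ IplusSet I q x xs → q i x = 0 := by
      intro i hi
      exact (Finset.mem_filter.1 (iplusSet_mem_active hi)).2
    have hlam'M : lam' ∈ Mult I q x xs := by
      constructor
      · have hterm : ∀ i, lam' i • g i
            = lb i • g i + (ε • (μ i • g i) - ε • (l i • g i)) := by
          intro i
          rw [show lam' i = lb i + ε * (μ i - l i) from rfl, add_smul, mul_smul, sub_smul,
            smul_sub]
        rw [Finset.sum_congr rfl fun i _ => hterm i, Finset.sum_add_distrib,
          Finset.sum_sub_distrib, ← Finset.smul_sum, ← Finset.smul_sum, hleq, hlbM.1,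
          sub_self, add_zero]
      · intro i hiI
        have hiE : i ∉ E := Finset.disjoint_right.1 hdisj hiI
        by_cases hiP : i ∈ IplusSet I q x xs
        · have hμi : μ i = 0 := by
            by_contra h
            exact (Finset.mem_filter.1 (hμsupp i h)).2 hiP
          have hiS : i ∈ S := Finset.mem_filter.2 ⟨hiI, hiP⟩
          have h7 := hεle i hiS
          have h8 : ε * l i ≤ ε * |l i| :=
            mul_le_mul_of_nonneg_left (le_abs_self _) hεpos.le
          constructor
          · rw [show lam' i = lb i + ε * (μ i - l i) from rfl, hμi]
            simp only [zero_sub, mul_neg]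
            linarith
          · rw [hIplusActive i hiP, mul_zero]
        · have hli : l i = 0 := hcsupp i (by
            rw [hTset]; rintro (h | h); exacts [hiE h, hiP h])
          by_cases hqa : q i x = 0
          · constructor
            · rw [show lam' i = lb i + ε * (μ i - l i) from rfl, hli]
              have := (hlbM.2 i hiI).1
              have := hμ0 i
              nlinarith
            · rw [hqa, mul_zero]
          · have hμi : μ i = 0 := by
              by_contra h
              exact hqa (Finset.mem_filter.1 (Finset.mem_filter.1 (hμsupp i h)).1).2
            have hlbi : lb i = 0 := by
              rcases mul_eq_zero.1 (hlbM.2 i hiI).2 with h | h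
              · exact h
              · exact absurd h hqa
            have : lam' i = 0 := by
              rw [show lam' i = lb i + ε * (μ i - l i) from rfl, hli, hμi, hlbi]
              ring
            rw [this]
            exact ⟨le_refl 0, zero_mul _⟩
    -- find a positive weight and contradict
    obtain ⟨a0, ha0, ha0pos⟩ := Finset.exists_lt_of_sum_lt (f := fun _ : ι'' => (0:ℝ))
      (g := wF) (by rw [hw1, Finset.sum_const, smul_zero]; exact one_pos)
    obtain ⟨hi0Atil, -⟩ := hrep a0 ha0
    obtain ⟨hi0A, hi0P⟩ := Finset.mem_filter.1 hi0Atil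
    have hi0I : rep a0 ∈ I := (Finset.mem_filter.1 hi0A).1
    have hμi0 : 0 < μ (rep a0) := by
      have h9 : wF a0 ≤ μ (rep a0) := by
        rw [hμdef]
        exact Finset.single_le_sum (f := wF)
          (fun a ha => hw0 a (Finset.mem_filter.1 ha).1)
          (Finset.mem_filter.2 ⟨ha0, rfl⟩)
      linarith
    have hli0 : l (rep a0) = 0 := hcsupp _ (by
      rw [hTset]
      rintro (h | h)
      · exact (Finset.disjoint_right.1 hdisj hi0I) h
      · exact hi0P h)
    have hlam'pos : 0 < lam' (rep a0) := by
      have := (hlbM.2 _ hi0I).1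
      rw [show lam' (rep a0) = lb (rep a0) + ε * (μ (rep a0) - l (rep a0)) from rfl, hli0]
      nlinarith
    exact hi0P ⟨lam', hlam'M, Finset.mem_filter.2 ⟨hi0I, hlam'pos⟩⟩
  · -- separation case
    obtain ⟨f, sep, hfC, hs0⟩ := geometric_hahn_banach_closed_point
      (convex_convexHull ℝ _) (((Atil.finite_toSet.image p).isCompact_convexHull (𝕜 := ℝ)).isClosed) h0
    have hs0' : sep < 0 := by simpa using hs0
    set z := (InnerProductSpace.toDual ℝ (EuclideanSpace ℝ (Fin n))).symm f with hzdef
    have hzf : ∀ a, ⟪z, a⟫ = f a := fun a => InnerProductSpace.toDual_symm_apply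
    refine ⟨(Lᗮ.orthogonalProjectionOnto z : _), Submodule.coe_mem _, ?_⟩
    intro i hiA hiP
    have hiAtil : i ∈ Atil := Finset.mem_filter.2 ⟨hiA, hiP⟩
    have hpiC : p i ∈ convexHull ℝ (p '' (Atil : Set ι)) :=
      subset_convexHull ℝ _ ⟨i, by simpa using hiAtil, rfl⟩
    have h3 : ⟪g i - p i, ((Lᗮ.orthogonalProjectionOnto z : EuclideanSpace ℝ (Fin n)))⟫ = 0 :=
      (Submodule.mem_orthogonal L _).1 (Submodule.coe_mem _) _ (hgpL i)
    have h4 : ⟪p i, z - (Lᗮ.orthogonalProjectionOnto z : EuclideanSpace ℝ (Fin n))⟫ = 0 := by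
      have h5 := Submodule.sub_starProjection_mem_orthogonal (K := Lᗮ) z
      exact (Submodule.mem_orthogonal Lᗮ _).1 h5 _ (hpLperp i)
    have h6 : ⟪g i, ((Lᗮ.orthogonalProjectionOnto z : EuclideanSpace ℝ (Fin n)))⟫ = ⟪z, p i⟫ := by
      have e1 : g i = (g i - p i) + p i := by abel
      rw [e1, inner_add_left, h3, zero_add]
      rw [inner_sub_right] at h4
      have h7 := real_inner_comm z (p i)
      linarith [h4, h7]
    rw [h6, hzf]
    exact lt_trans (hfC _ hpiC) hs0'


/-- **Lemma 3.1.** Let MSCQ hold at `x ∈ Γ` and `Λ(x, x*) ≠ ∅`, and suppose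
`Λ(x, x*; v₁) = Λ(x, x*; v₂)` for all nonzero `v₁, v₂ ∈ K(x, x*)`. Then for every
`v ∈ K(x, x*)` and all `λ¹, λ² ∈ Λ(x, x*; v)`,
`∇²⟨λ¹ − λ², q⟩(x)v ∈ span{∇q_i(x) : i ∈ E ∪ I⁺(x, x*)}`. -/
theorem lemma31
    {n : ℕ} {ι : Type*} [Fintype ι] [DecidableEq ι] [Nonempty ι]
    (E I : Finset ι) (hdisj : Disjoint E I) (hunion : E ∪ I = Finset.univ)
    (q : ι → EuclideanSpace ℝ (Fin n) → ℝ) (hq : ∀ i, ContDiff ℝ 2 (q i))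
    (x xs : EuclideanSpace ℝ (Fin n)) (hfeas : x ∈ Feas E I q)
    (hmscq : ∃ κ > (0:ℝ), MSCQat E I q x κ)
    (hne : (Mult I q x xs).Nonempty)
    (hconst : ∀ v₁ ∈ Crit E I q x xs \ {0}, ∀ v₂ ∈ Crit E I q x xs \ {0},
      MultArgmax I q x xs v₁ = MultArgmax I q x xs v₂) :
    ∀ v ∈ Crit E I q x xs, ∀ lam₁ ∈ MultArgmax I q x xs v, ∀ lam₂ ∈ MultArgmax I q x xs v,
      HessComb q (lam₁ - lam₂) x v ∈
        Submodule.span ℝ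
          ((fun i => gradient (q i) x) '' {i | i ∈ E ∨ i ∈ IplusSet I q x xs}) := by
  classical
  intro v hv lam₁ hlam₁ lam₂ hlam₂
  by_cases hv0 : v = 0
  · rw [hv0]
    have hz : HessComb q (lam₁ - lam₂) x 0 = 0 := by
      simp [HessComb, HessApp]
    rw [hz]
    exact Submodule.zero_mem _
  set L : Submodule ℝ (EuclideanSpace ℝ (Fin n)) := Submodule.span ℝ
    ((fun i => gradient (q i) x) '' {i | i ∈ E ∨ i ∈ IplusSet I q x xs}) with hL
  have hgT : ∀ i, (i ∈ E ∨ i ∈ IplusSet I q x xs) → gradient (q i) x ∈ L :=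
    fun i hi => Submodule.subset_span ⟨i, hi, rfl⟩
  have hxsL : xs ∈ L := by
    obtain ⟨lam0, hlam0⟩ := hne
    rw [← hlam0.1]
    refine Submodule.sum_mem _ fun i _ => ?_
    by_cases hiT : i ∈ E ∨ i ∈ IplusSet I q x xs
    · exact Submodule.smul_mem _ _ (hgT i hiT)
    · have hiI : i ∈ I := by
        have hm := Finset.mem_univ i
        rw [← hunion, Finset.mem_union] at hm
        rcases hm with h | h
        · exact absurd (Or.inl h) hiT
        · exact h
      have h0 : lam0 i = 0 := by
        by_contra h
        have hpos : 0 < lam0 i := lt_of_le_of_ne (hlam0.2 i hiI).1 (Ne.symm h)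
        exact hiT (Or.inr ⟨lam0, hlam0, Finset.mem_filter.2 ⟨hiI, hpos⟩⟩)
      rw [h0, zero_smul]
      exact Submodule.zero_mem _
  have hKlin : ∀ u : EuclideanSpace ℝ (Fin n), (∀ i ∈ E, ⟪gradient (q i) x, u⟫ = 0) →
      (∀ i ∈ ActiveI I q x, ⟪gradient (q i) x, u⟫ ≤ 0) → ⟪xs, u⟫ = 0 →
      u ∈ Crit E I q x xs :=
    fun u h1 h2 h3 => ⟨klin_subset_bcone E I hunion q hq x hfeas hmscq u h1 h2, h3⟩
  obtain ⟨hvB, hvxs⟩ := hv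
  obtain ⟨hvE, hvA⟩ := bcone_deriv E I q hq x hfeas v hvB
  have hQ0 : ∀ w, w ∈ Crit E I q x xs → ⟪w, HessComb q (lam₁ - lam₂) x w⟫ = 0 := by
    intro w hw
    by_cases hw0 : w = 0
    · rw [hw0, inner_zero_left]
    · have hEq : MultArgmax I q x xs v = MultArgmax I q x xs w :=
        hconst v ⟨⟨hvB, hvxs⟩, by simpa using hv0⟩ w ⟨hw, by simpa using hw0⟩
      have h1 : lam₁ ∈ MultArgmax I q x xs w := hEq ▸ hlam₁
      have h2 : lam₂ ∈ MultArgmax I q x xs w := hEq ▸ hlam₂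
      obtain ⟨h1a, h1b⟩ := h1
      obtain ⟨h2a, h2b⟩ := h2
      have h12 := h1b lam₂ h2a
      have h21 := h2b lam₁ h1a
      rw [hessComb_sub, inner_sub_right]
      have e1 : ⟪w, HessComb q lam₁ x w⟫ = QuadComb q lam₁ x w := rfl
      have e2 : ⟪w, HessComb q lam₂ x w⟫ = QuadComb q lam₂ x w := rfl
      rw [e1, e2]
      linarith
  have horth : ∀ u : EuclideanSpace ℝ (Fin n), (∀ i ∈ E, ⟪gradient (q i) x, u⟫ = 0) →
      (∀ i ∈ ActiveI I q x, ⟪gradient (q i) x, u⟫ ≤ 0) → ⟪xs, u⟫ = 0 →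
      ⟪HessComb q (lam₁ - lam₂) x v, u⟫ = 0 := by
    intro u h1 h2 h3
    have hu := hKlin u h1 h2 h3
    have hvu := hKlin (v + u)
      (fun i hi => by rw [inner_add_right, hvE i hi, h1 i hi, add_zero])
      (fun i hi => by
        rw [inner_add_right]
        have ha := hvA i hi
        have hb := h2 i hi
        linarith)
      (by rw [inner_add_right, hvxs, h3, add_zero])
    have e1 := hQ0 v ⟨hvB, hvxs⟩
    have e2 := hQ0 u hu
    have e3 := hQ0 (v + u) hvu
    rw [hessComb_add_right, inner_add_left, inner_add_right, inner_add_right] at e3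
    have hs := inner_hessComb_symm q hq (lam₁ - lam₂) x v u
    rw [real_inner_comm]
    linarith
  rw [← Submodule.orthogonal_orthogonal L, Submodule.mem_orthogonal]
  intro w hw
  obtain ⟨u0, hu0L, hu0neg⟩ := exists_neg_dir E I hdisj q x xs hne
  rw [← hL] at hu0L
  have hu0inner : ∀ a, a ∈ L → ⟪a, u0⟫ = 0 :=
    fun a ha => (Submodule.mem_orthogonal L u0).1 hu0L a ha
  have hwinner : ∀ a, a ∈ L → ⟪a, w⟫ = 0 :=
    fun a ha => (Submodule.mem_orthogonal L w).1 hw a ha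
  set Atil : Finset ι := (ActiveI I q x).filter (fun i => i ∉ IplusSet I q x xs) with hAtil
  have hεex : ∃ ε : ℝ, 0 < ε ∧
      ∀ i ∈ Atil, ε * |⟪gradient (q i) x, w⟫| ≤ -⟪gradient (q i) x, u0⟫ := by
    rcases Finset.eq_empty_or_nonempty Atil with he | hne'
    · exact ⟨1, one_pos, fun i hi => by
        rw [he] at hi; exact absurd hi (Finset.notMem_empty i)⟩
    · refine ⟨Atil.inf' hne' (fun i => -⟪gradient (q i) x, u0⟫ / (|⟪gradient (q i) x, w⟫| + 1)),
        ?_, ?_⟩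
      · rw [Finset.lt_inf'_iff]
        intro i hi
        obtain ⟨hiA, hiP⟩ := Finset.mem_filter.1 hi
        have h6 := hu0neg i hiA hiP
        have h7 : (0:ℝ) < -⟪gradient (q i) x, u0⟫ := by linarith
        positivity
      · intro i hi
        obtain ⟨hiA, hiP⟩ := Finset.mem_filter.1 hi
        have hneg := hu0neg i hiA hiP
        have h5 := Finset.inf'_le
          (fun i => -⟪gradient (q i) x, u0⟫ / (|⟪gradient (q i) x, w⟫| + 1)) hi
        have h6 : (0:ℝ) < |⟪gradient (q i) x, w⟫| + 1 := by positivity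
        calc Atil.inf' hne' (fun i => -⟪gradient (q i) x, u0⟫ / (|⟪gradient (q i) x, w⟫| + 1))
              * |⟪gradient (q i) x, w⟫|
            ≤ (-⟪gradient (q i) x, u0⟫ / (|⟪gradient (q i) x, w⟫| + 1))
              * |⟪gradient (q i) x, w⟫| := mul_le_mul_of_nonneg_right h5 (abs_nonneg _)
          _ ≤ (-⟪gradient (q i) x, u0⟫ / (|⟪gradient (q i) x, w⟫| + 1))
              * (|⟪gradient (q i) x, w⟫| + 1) := by
                refine mul_le_mul_of_nonneg_left (by linarith) ?_
                have h7 : (0:ℝ) < -⟪gradient (q i) x, u0⟫ := by linarith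
                positivity
          _ = -⟪gradient (q i) x, u0⟫ := div_mul_cancel₀ _ h6.ne'
  obtain ⟨ε, hεpos, hεle⟩ := hεex
  have hdir : ∀ s : ℝ, |s| = ε → ⟪HessComb q (lam₁ - lam₂) x v, u0 + s • w⟫ = 0 := by
    intro s habs
    apply horth
    · intro i hi
      have hgiL : gradient (q i) x ∈ L := hgT i (Or.inl hi)
      rw [inner_add_right, real_inner_smul_right, hu0inner _ hgiL, hwinner _ hgiL, mul_zero,
        add_zero]
    · intro i hi
      by_cases hiP : i ∈ IplusSet I q x xs
      · have hgiL : gradient (q i) x ∈ L := hgT i (Or.inr hiP)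
        rw [inner_add_right, real_inner_smul_right, hu0inner _ hgiL, hwinner _ hgiL, mul_zero,
          add_zero]
      · have hi' : i ∈ Atil := Finset.mem_filter.2 ⟨hi, hiP⟩
        have h7 := hεle i hi'
        have h8 : s * ⟪gradient (q i) x, w⟫ ≤ ε * |⟪gradient (q i) x, w⟫| := by
          calc s * ⟪gradient (q i) x, w⟫ ≤ |s * ⟪gradient (q i) x, w⟫| := le_abs_self _
            _ = |s| * |⟪gradient (q i) x, w⟫| := abs_mul _ _
            _ = ε * |⟪gradient (q i) x, w⟫| := by rw [habs]
        rw [inner_add_right, real_inner_smul_right]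
        linarith
    · rw [inner_add_right, real_inner_smul_right, hu0inner xs hxsL, hwinner xs hxsL, mul_zero,
        add_zero]
  have hp1 := hdir ε (abs_of_pos hεpos)
  have hp2 := hdir (-ε) (by rw [abs_neg]; exact abs_of_pos hεpos)
  rw [inner_add_right, real_inner_smul_right] at hp1
  rw [neg_smul, ← sub_eq_add_neg, inner_sub_right, real_inner_smul_right] at hp2
  have h9 : ε * ⟪HessComb q (lam₁ - lam₂) x v, w⟫ = 0 := by linarith
  have hB := (mul_eq_zero.1 h9).resolve_left hεpos.ne'
  rw [real_inner_comm]
  exact hB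

end
end

section
/- (Example 4.1, constraint-qualification claims) In ℝ⁴ with x = (x₁, x₂, x₃, x₄), let q₁(x) = x₁ − x₃, q₂(x) = −x₁ − x₃, q₃(x) = x₂ − 2x₃, q₄(x) = −x₂ − 2x₃, q₅(x) = −x₁ + x₂², q₆(x) = −x₁ (inequality constraints, I = {1, …, 6}) and q₇(x) = −x₁ + x₂² + x₂ (equality constraint, E = {7}), and let Γ := {x ∈ ℝ⁴ : q_i(x) ≤ 0 for i = 1, …, 6, q₇(x) = 0} and x̄ := (0,0,0,0) ∈ Γ. Then: (a) CRCQ fails at x̄; (b) RCRCQ holds at x̄. -/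
open Filter Topology Metric Set
open scoped RealInnerProductSpace

noncomputable section

variable {n : ℕ} {ι : Type*} [Fintype ι] [DecidableEq ι]

/-- The constant rank constraint qualification at `xbar`. -/
def CRCQat {n : ℕ} {ι : Type*} [Fintype ι] [DecidableEq ι]
    (E I : Finset ι) (q : ι → EuclideanSpace ℝ (Fin n) → ℝ)
    (xbar : EuclideanSpace ℝ (Fin n)) : Prop :=
  ∃ U ∈ 𝓝 xbar, ∀ K ⊆ E, ∀ J ⊆ ActiveI I q xbar, ∀ x ∈ U, ∀ y ∈ U,
    RankAt q (K ∪ J) x = RankAt q (K ∪ J) y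

/-- The constraint functions of Example 4.1: `q₁,…,q₆` are inequality constraints (indices
`0,…,5`) and `q₇` (index `6`) is the equality constraint. -/
def qEx : Fin 7 → EuclideanSpace ℝ (Fin 4) → ℝ :=
  ![fun x => x 0 - x 2,
    fun x => -x 0 - x 2,
    fun x => x 1 - 2 * x 2,
    fun x => -x 1 - 2 * x 2,
    fun x => -x 0 + x 1 ^ 2,
    fun x => -x 0,
    fun x => -x 0 + x 1 ^ 2 + x 1]

/-! ### Auxiliary development for Example 4.1 -/

abbrev Ex41.E4 := EuclideanSpace ℝ (Fin 4)

namespace Ex41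

def vv (a b c d : ℝ) : E4 := (WithLp.equiv 2 (Fin 4 → ℝ)).symm ![a, b, c, d]

@[simp] lemma vv_apply (a b c d : ℝ) (j : Fin 4) : vv a b c d j = ![a, b, c, d] j := rfl

def e1x : E4 := vv 0 1 0 0

lemma hasFDerivAt_coord (i : Fin 4) (x : E4) :
    HasFDerivAt (fun y : E4 => y i) (EuclideanSpace.proj i : E4 →L[ℝ] ℝ) x := by
  have h := (EuclideanSpace.proj (𝕜 := ℝ) i).hasFDerivAt (x := x)
  have he : ⇑(EuclideanSpace.proj i : E4 →L[ℝ] ℝ) = fun y : E4 => y i := rfl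
  rwa [he] at h

lemma gradient_eq_of (f : E4 → ℝ) (x g : E4) (L : E4 →L[ℝ] ℝ)
    (hf : HasFDerivAt f L x) (hL : ∀ v : E4, L v = ∑ j, g j * v j) :
    gradient f x = g := by
  apply HasGradientAt.gradient
  rw [hasGradientAt_iff_hasFDerivAt]
  suffices hd : (InnerProductSpace.toDual ℝ E4) g = L by rw [hd]; exact hf
  ext v
  rw [InnerProductSpace.toDual_apply_apply, PiLp.inner_apply, hL v]
  simp [RCLike.inner_apply, mul_comm]

/-- The gradients of the constraint functions. -/
def gq : Fin 7 → E4 → E4 :=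
  ![fun _ => vv 1 0 (-1) 0,
    fun _ => vv (-1) 0 (-1) 0,
    fun _ => vv 0 1 (-2) 0,
    fun _ => vv 0 (-1) (-2) 0,
    fun x => vv (-1) (2 * x 1) 0 0,
    fun _ => vv (-1) 0 0 0,
    fun x => vv (-1) (2 * x 1 + 1) 0 0]

@[simp] lemma gq0 (x : E4) : gq 0 x = vv 1 0 (-1) 0 := rfl
@[simp] lemma gq1 (x : E4) : gq 1 x = vv (-1) 0 (-1) 0 := rfl
@[simp] lemma gq2 (x : E4) : gq 2 x = vv 0 1 (-2) 0 := rfl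
@[simp] lemma gq3 (x : E4) : gq 3 x = vv 0 (-1) (-2) 0 := rfl
@[simp] lemma gq4 (x : E4) : gq 4 x = vv (-1) (2 * x 1) 0 0 := rfl
@[simp] lemma gq5 (x : E4) : gq 5 x = vv (-1) 0 0 0 := rfl
@[simp] lemma gq6 (x : E4) : gq 6 x = vv (-1) (2 * x 1 + 1) 0 0 := rfl

lemma sq_eq_mul (i : Fin 4) (x : E4) :
    HasFDerivAt (fun y : E4 => y i ^ 2)
      ((x i • (EuclideanSpace.proj i : E4 →L[ℝ] ℝ)) + x i • EuclideanSpace.proj i) x := by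
  have h := (hasFDerivAt_coord i x).mul (hasFDerivAt_coord i x)
  have : ((fun y : E4 => y i) * fun y : E4 => y i) = fun y : E4 => y i ^ 2 := by
    funext y; simp only [Pi.mul_apply]; ring
  rwa [this] at h

lemma grad_q (i : Fin 7) (x : E4) : gradient (qEx i) x = gq i x := by
  fin_cases i
  · exact gradient_eq_of _ _ _ _ ((hasFDerivAt_coord 0 x).sub (hasFDerivAt_coord 2 x))
      (by intro v; simp [Fin.sum_univ_four]; try ring)
  · exact gradient_eq_of _ _ _ _ (((hasFDerivAt_coord 0 x).neg).sub (hasFDerivAt_coord 2 x))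
      (by intro v; simp [Fin.sum_univ_four]; try ring)
  · exact gradient_eq_of _ _ _ _ ((hasFDerivAt_coord 1 x).sub
      ((hasFDerivAt_coord 2 x).const_mul 2))
      (by intro v; simp [Fin.sum_univ_four]; try ring)
  · exact gradient_eq_of _ _ _ _ (((hasFDerivAt_coord 1 x).neg).sub
      ((hasFDerivAt_coord 2 x).const_mul 2))
      (by intro v; simp [Fin.sum_univ_four]; try ring)
  · exact gradient_eq_of _ _ _ _ (((hasFDerivAt_coord 0 x).neg).add (sq_eq_mul 1 x))
      (by intro v; simp [Fin.sum_univ_four]; try ring)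
  · exact gradient_eq_of _ _ _ _ ((hasFDerivAt_coord 0 x).neg)
      (by intro v; simp [Fin.sum_univ_four]; try ring)
  · exact gradient_eq_of _ _ _ _ ((((hasFDerivAt_coord 0 x).neg).add (sq_eq_mul 1 x)).add
      (hasFDerivAt_coord 1 x))
      (by intro v; simp [Fin.sum_univ_four]; try ring)

def cvx : Fin 7 → ℝ := ![0, 0, 0, 0, 2, 0, 2]

@[simp] lemma cvx0 : cvx 0 = 0 := rfl
@[simp] lemma cvx1 : cvx 1 = 0 := rfl
@[simp] lemma cvx2 : cvx 2 = 0 := rfl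
@[simp] lemma cvx3 : cvx 3 = 0 := rfl
@[simp] lemma cvx4 : cvx 4 = 2 := rfl
@[simp] lemma cvx5 : cvx 5 = 0 := rfl
@[simp] lemma cvx6 : cvx 6 = 2 := rfl

lemma gq_shift (i : Fin 7) (x y : E4) :
    gq i x = gq i y + (cvx i * (x 1 - y 1)) • e1x := by
  fin_cases i <;>
    (ext j; fin_cases j <;>
      simp [e1x, PiLp.add_apply, PiLp.smul_apply] <;> ring)

lemma mem_img {s : Finset (Fin 7)} (x : E4) {i : Fin 7} (hi : i ∈ s) :
    gq i x ∈ (fun i => gradient (qEx i) x) '' ↑s :=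
  ⟨i, Finset.mem_coe.mpr hi, grad_q i x⟩

lemma rank_eq_of_e1_mem (s : Finset (Fin 7)) (x y : E4)
    (hx : e1x ∈ Submodule.span ℝ ((fun i => gradient (qEx i) x) '' ↑s))
    (hy : e1x ∈ Submodule.span ℝ ((fun i => gradient (qEx i) y) '' ↑s)) :
    RankAt qEx s x = RankAt qEx s y := by
  have key : ∀ u w : E4,
      e1x ∈ Submodule.span ℝ ((fun i => gradient (qEx i) w) '' ↑s) →
      Submodule.span ℝ ((fun i => gradient (qEx i) u) '' ↑s) ≤
        Submodule.span ℝ ((fun i => gradient (qEx i) w) '' ↑s) := by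
    intro u w hw
    rw [Submodule.span_le]
    rintro _ ⟨i, hi, rfl⟩
    show gradient (qEx i) u ∈ _
    have h1 : gradient (qEx i) u = gradient (qEx i) w + (cvx i * (u 1 - w 1)) • e1x := by
      rw [grad_q, grad_q, gq_shift i u w]
    rw [h1]
    exact Submodule.add_mem _
      (Submodule.subset_span (Set.mem_image_of_mem _ hi))
      (Submodule.smul_mem _ _ hw)
  have heq := le_antisymm (key x y hy) (key y x hx)
  unfold RankAt
  rw [heq]

lemma e1_mem_of_comb (s : Finset (Fin 7)) (x : E4) (i j : Fin 7)
    (h6 : (6 : Fin 7) ∈ s) (hi : i ∈ s) (hj : j ∈ s) (c0 c1 c2 : ℝ)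
    (h : e1x = c0 • gq 6 x + c1 • gq i x + c2 • gq j x) :
    e1x ∈ Submodule.span ℝ ((fun i => gradient (qEx i) x) '' ↑s) := by
  rw [h]
  exact Submodule.add_mem _
    (Submodule.add_mem _
      (Submodule.smul_mem _ _ (Submodule.subset_span (mem_img x h6)))
      (Submodule.smul_mem _ _ (Submodule.subset_span (mem_img x hi))))
    (Submodule.smul_mem _ _ (Submodule.subset_span (mem_img x hj)))

lemma abs_coord_le (x : E4) (i : Fin 4) : |x i| ≤ ‖x‖ := by
  rw [EuclideanSpace.norm_eq]
  have h1 : |x i| = Real.sqrt (‖x i‖ ^ 2) := by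
    rw [Real.sqrt_sq_eq_abs, Real.norm_eq_abs, abs_abs]
  rw [h1]
  apply Real.sqrt_le_sqrt
  exact Finset.single_le_sum (f := fun j => ‖x j‖ ^ 2) (fun j _ => sq_nonneg _)
    (Finset.mem_univ i)

/-! ### Membership recipes for `e₁` -/

lemma key1 {x : E4} (hx : |x 1| < 4⁻¹) : 2 * x 1 + 1 ≠ 0 := by
  obtain ⟨h1, h2⟩ := abs_lt.mp hx; intro h; rw [inv_eq_one_div] at *; linarith

lemma key2 {x : E4} (hx : |x 1| < 4⁻¹) : 4 * x 1 + 1 ≠ 0 := by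
  obtain ⟨h1, h2⟩ := abs_lt.mp hx; intro h; rw [inv_eq_one_div] at *; linarith

lemma key3 {x : E4} (hx : |x 1| < 4⁻¹) : 4 * x 1 + 3 ≠ 0 := by
  obtain ⟨h1, h2⟩ := abs_lt.mp hx; intro h; rw [inv_eq_one_div] at *; linarith

lemma e1m_4 (s : Finset (Fin 7)) (x : E4) (h6 : (6 : Fin 7) ∈ s) (h4 : (4 : Fin 7) ∈ s) :
    e1x ∈ Submodule.span ℝ ((fun i => gradient (qEx i) x) '' ↑s) :=
  e1_mem_of_comb s x 4 4 h6 h4 h4 1 (-1) 0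
    (by ext j; fin_cases j <;> (simp [e1x, PiLp.add_apply, PiLp.smul_apply]; try ring))

lemma e1m_5 (s : Finset (Fin 7)) (x : E4) (h6 : (6 : Fin 7) ∈ s) (h5 : (5 : Fin 7) ∈ s)
    (hx : |x 1| < 4⁻¹) :
    e1x ∈ Submodule.span ℝ ((fun i => gradient (qEx i) x) '' ↑s) :=
  e1_mem_of_comb s x 5 5 h6 h5 h5 (2 * x 1 + 1)⁻¹ (-(2 * x 1 + 1)⁻¹) 0
    (by
      have h := key1 hx
      ext j; fin_cases j <;>
        (simp [e1x, PiLp.add_apply, PiLp.smul_apply]; try field_simp))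

lemma e1m_23 (s : Finset (Fin 7)) (x : E4) (h6 : (6 : Fin 7) ∈ s) (h2 : (2 : Fin 7) ∈ s)
    (h3 : (3 : Fin 7) ∈ s) :
    e1x ∈ Submodule.span ℝ ((fun i => gradient (qEx i) x) '' ↑s) :=
  e1_mem_of_comb s x 2 3 h6 h2 h3 0 (1/2) (-(1/2))
    (by ext j; fin_cases j <;> (simp [e1x, PiLp.add_apply, PiLp.smul_apply]; try ring))

lemma e1m_01 (s : Finset (Fin 7)) (x : E4) (h6 : (6 : Fin 7) ∈ s) (h0 : (0 : Fin 7) ∈ s)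
    (h1 : (1 : Fin 7) ∈ s) (hx : |x 1| < 4⁻¹) :
    e1x ∈ Submodule.span ℝ ((fun i => gradient (qEx i) x) '' ↑s) :=
  e1_mem_of_comb s x 0 1 h6 h0 h1 (2 * x 1 + 1)⁻¹ ((2 * x 1 + 1)⁻¹ / 2) (-((2 * x 1 + 1)⁻¹ / 2))
    (by
      have h := key1 hx
      ext j; fin_cases j <;>
        (simp [e1x, PiLp.add_apply, PiLp.smul_apply]; try field_simp; try ring))

lemma e1m_02 (s : Finset (Fin 7)) (x : E4) (h6 : (6 : Fin 7) ∈ s) (h0 : (0 : Fin 7) ∈ s)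
    (h2 : (2 : Fin 7) ∈ s) (hx : |x 1| < 4⁻¹) :
    e1x ∈ Submodule.span ℝ ((fun i => gradient (qEx i) x) '' ↑s) :=
  e1_mem_of_comb s x 0 2 h6 h0 h2 (2 * (4 * x 1 + 1)⁻¹) (2 * (4 * x 1 + 1)⁻¹)
      (-(4 * x 1 + 1)⁻¹)
    (by
      have h := key2 hx
      ext j; fin_cases j <;>
        (simp [e1x, PiLp.add_apply, PiLp.smul_apply]; try field_simp; try ring))

lemma e1m_03 (s : Finset (Fin 7)) (x : E4) (h6 : (6 : Fin 7) ∈ s) (h0 : (0 : Fin 7) ∈ s)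
    (h3 : (3 : Fin 7) ∈ s) (hx : |x 1| < 4⁻¹) :
    e1x ∈ Submodule.span ℝ ((fun i => gradient (qEx i) x) '' ↑s) :=
  e1_mem_of_comb s x 0 3 h6 h0 h3 (2 * (4 * x 1 + 3)⁻¹) (2 * (4 * x 1 + 3)⁻¹)
      (-(4 * x 1 + 3)⁻¹)
    (by
      have h := key3 hx
      ext j; fin_cases j <;>
        (simp [e1x, PiLp.add_apply, PiLp.smul_apply]; try field_simp; try ring))

lemma e1m_12 (s : Finset (Fin 7)) (x : E4) (h6 : (6 : Fin 7) ∈ s) (h1 : (1 : Fin 7) ∈ s)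
    (h2 : (2 : Fin 7) ∈ s) (hx : |x 1| < 4⁻¹) :
    e1x ∈ Submodule.span ℝ ((fun i => gradient (qEx i) x) '' ↑s) :=
  e1_mem_of_comb s x 1 2 h6 h1 h2 (2 * (4 * x 1 + 3)⁻¹) (-(2 * (4 * x 1 + 3)⁻¹))
      ((4 * x 1 + 3)⁻¹)
    (by
      have h := key3 hx
      ext j; fin_cases j <;>
        (simp [e1x, PiLp.add_apply, PiLp.smul_apply]; try field_simp; try ring))

lemma e1m_13 (s : Finset (Fin 7)) (x : E4) (h6 : (6 : Fin 7) ∈ s) (h1 : (1 : Fin 7) ∈ s)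
    (h3 : (3 : Fin 7) ∈ s) (hx : |x 1| < 4⁻¹) :
    e1x ∈ Submodule.span ℝ ((fun i => gradient (qEx i) x) '' ↑s) :=
  e1_mem_of_comb s x 1 3 h6 h1 h3 (2 * (4 * x 1 + 1)⁻¹) (-(2 * (4 * x 1 + 1)⁻¹))
      ((4 * x 1 + 1)⁻¹)
    (by
      have h := key2 hx
      ext j; fin_cases j <;>
        (simp [e1x, PiLp.add_apply, PiLp.smul_apply]; try field_simp; try ring))

/-! ### Direct rank computations -/

lemma ne_zero_coord {u : E4} {j : Fin 4} (h : u j ≠ 0) : u ≠ 0 := by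
  intro h0
  apply h
  rw [h0]
  simp

lemma rank_pair_aux {u w : E4} (hw : w ≠ 0) (hind : ∀ a : ℝ, a • w ≠ u) :
    Module.finrank ℝ (Submodule.span ℝ ({u, w} : Set E4)) = 2 := by
  have h : LinearIndependent ℝ ![u, w] :=
    linearIndependent_fin2.mpr ⟨by simpa using hw, by simpa using hind⟩
  have hr : ({u, w} : Set E4) = Set.range ![u, w] :=
    (Matrix.range_cons_cons_empty u w ![]).symm
  rw [hr, finrank_span_eq_card h, Fintype.card_fin]

lemma rank_J_empty (x : E4) : RankAt qEx ({6} ∪ (∅ : Finset (Fin 7))) x = 1 := by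
  unfold RankAt
  have himg : (fun i => gradient (qEx i) x) '' ↑({6} ∪ (∅ : Finset (Fin 7)))
      = {vv (-1) (2 * x 1 + 1) 0 0} := by
    simp [grad_q]
  rw [himg]
  exact finrank_span_singleton (ne_zero_coord (j := 0) (by simp))

lemma rank_J_single (x : E4) (i0 : Fin 7)
    (h : i0 = 0 ∨ i0 = 1 ∨ i0 = 2 ∨ i0 = 3) :
    RankAt qEx ({6} ∪ ({i0} : Finset (Fin 7))) x = 2 := by
  unfold RankAt
  rcases h with rfl | rfl | rfl | rfl
  · have himg : (fun i => gradient (qEx i) x) '' ↑({6} ∪ ({0} : Finset (Fin 7)))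
        = {vv 1 0 (-1) 0, vv (-1) (2 * x 1 + 1) 0 0} := by
      simp [grad_q, Finset.coe_union, Set.image_union, Set.image_insert_eq]
      exact Set.pair_comm _ _
    rw [himg]
    refine rank_pair_aux (ne_zero_coord (j := 0) (by simp)) ?_
    intro a ha
    have h2 := congrArg (fun v : E4 => v 2) ha
    simp [PiLp.smul_apply] at h2
  · have himg : (fun i => gradient (qEx i) x) '' ↑({6} ∪ ({1} : Finset (Fin 7)))
        = {vv (-1) 0 (-1) 0, vv (-1) (2 * x 1 + 1) 0 0} := by
      simp [grad_q, Finset.coe_union, Set.image_union, Set.image_insert_eq]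
      exact Set.pair_comm _ _
    rw [himg]
    refine rank_pair_aux (ne_zero_coord (j := 0) (by simp)) ?_
    intro a ha
    have h2 := congrArg (fun v : E4 => v 2) ha
    simp [PiLp.smul_apply] at h2
  · have himg : (fun i => gradient (qEx i) x) '' ↑({6} ∪ ({2} : Finset (Fin 7)))
        = {vv 0 1 (-2) 0, vv (-1) (2 * x 1 + 1) 0 0} := by
      simp [grad_q, Finset.coe_union, Set.image_union, Set.image_insert_eq]
      exact Set.pair_comm _ _
    rw [himg]
    refine rank_pair_aux (ne_zero_coord (j := 0) (by simp)) ?_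
    intro a ha
    have h2 := congrArg (fun v : E4 => v 2) ha
    simp [PiLp.smul_apply] at h2
  · have himg : (fun i => gradient (qEx i) x) '' ↑({6} ∪ ({3} : Finset (Fin 7)))
        = {vv 0 (-1) (-2) 0, vv (-1) (2 * x 1 + 1) 0 0} := by
      simp [grad_q, Finset.coe_union, Set.image_union, Set.image_insert_eq]
      exact Set.pair_comm _ _
    rw [himg]
    refine rank_pair_aux (ne_zero_coord (j := 0) (by simp)) ?_
    intro a ha
    have h2 := congrArg (fun v : E4 => v 2) ha
    simp [PiLp.smul_apply] at h2

/-! ### The three claims -/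

lemma qEx4_eval (x : E4) : qEx 4 x = -x 0 + x 1 ^ 2 := rfl
lemma qEx5_eval (x : E4) : qEx 5 x = -x 0 := rfl
lemma qEx6_eval (x : E4) : qEx 6 x = -x 0 + x 1 ^ 2 + x 1 := rfl
lemma qEx0_eval (x : E4) : qEx 0 x = x 0 - x 2 := rfl
lemma qEx1_eval (x : E4) : qEx 1 x = -x 0 - x 2 := rfl
lemma qEx2_eval (x : E4) : qEx 2 x = x 1 - 2 * x 2 := rfl
lemma qEx3_eval (x : E4) : qEx 3 x = -x 1 - 2 * x 2 := rfl

lemma zero_coord (j : Fin 4) : (0 : E4) j = 0 := rfl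

lemma feas0 : (0 : E4) ∈ Feas ({6} : Finset (Fin 7)) ({0, 1, 2, 3, 4, 5} : Finset (Fin 7)) qEx := by
  constructor
  · intro i hi
    fin_cases hi
    rw [qEx6_eval]
    simp [zero_coord]
  · intro i hi
    fin_cases hi
    · rw [qEx0_eval]; simp [zero_coord]
    · rw [qEx1_eval]; simp [zero_coord]
    · rw [qEx2_eval]; simp [zero_coord]
    · rw [qEx3_eval]; simp [zero_coord]
    · rw [qEx4_eval]; simp [zero_coord]
    · rw [qEx5_eval]; simp [zero_coord]

lemma not_crcq :
    ¬ CRCQat ({6} : Finset (Fin 7)) ({0, 1, 2, 3, 4, 5} : Finset (Fin 7)) qEx 0 := by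
  rintro ⟨U, hU, h⟩
  obtain ⟨ε, hε, hball⟩ := Metric.mem_nhds_iff.mp hU
  set y : E4 := EuclideanSpace.single (1 : Fin 4) (ε / 2) with hy_def
  have hy1 : y 1 = ε / 2 := by simp [hy_def]
  have hyU : y ∈ U := by
    apply hball
    rw [mem_ball, dist_zero_right, hy_def, EuclideanSpace.norm_single,
      Real.norm_eq_abs, abs_of_pos (by linarith)]
    linarith
  have h0U : (0 : E4) ∈ U := hball (mem_ball_self hε)
  have hsub : ({4, 5} : Finset (Fin 7)) ⊆
      ActiveI ({0, 1, 2, 3, 4, 5} : Finset (Fin 7)) qEx 0 := by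
    intro i hi
    fin_cases hi
    · refine Finset.mem_filter.mpr ⟨by decide, ?_⟩
      rw [qEx4_eval]; simp [zero_coord]
    · refine Finset.mem_filter.mpr ⟨by decide, ?_⟩
      rw [qEx5_eval]; simp [zero_coord]
  have key := h ∅ (Finset.empty_subset _) {4, 5} hsub 0 h0U y hyU
  rw [Finset.empty_union] at key
  have hL : RankAt qEx ({4, 5} : Finset (Fin 7)) 0 = 1 := by
    unfold RankAt
    have h40 : gq 4 (0 : E4) = vv (-1) 0 0 0 := by
      ext j; fin_cases j <;> simp [zero_coord]
    have himg : (fun i => gradient (qEx i) (0 : E4)) '' ↑({4, 5} : Finset (Fin 7))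
        = {vv (-1) 0 0 0} := by
      simp [grad_q, Set.image_insert_eq, h40, zero_coord]
    rw [himg]
    exact finrank_span_singleton (ne_zero_coord (j := 0) (by simp))
  have hR : RankAt qEx ({4, 5} : Finset (Fin 7)) y = 2 := by
    unfold RankAt
    have himg : (fun i => gradient (qEx i) y) '' ↑({4, 5} : Finset (Fin 7))
        = {vv (-1) (2 * y 1) 0 0, vv (-1) 0 0 0} := by
      simp [grad_q, Set.image_insert_eq]
    rw [himg]
    refine rank_pair_aux (ne_zero_coord (j := 0) (by simp)) ?_
    intro a ha
    have h1 := congrArg (fun v : E4 => v 1) ha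
    simp [PiLp.smul_apply, hy1] at h1
    linarith
  rw [hL, hR] at key
  exact absurd key (by norm_num)

lemma rcrcq :
    RCRCQat ({6} : Finset (Fin 7)) ({0, 1, 2, 3, 4, 5} : Finset (Fin 7)) qEx 0 := by
  refine ⟨Metric.ball (0 : E4) 4⁻¹, Metric.ball_mem_nhds _ (by norm_num), ?_⟩
  intro J hJ x hx y hy
  have hJ' : J ⊆ ({0, 1, 2, 3, 4, 5} : Finset (Fin 7)) :=
    hJ.trans (Finset.filter_subset _ _)
  have hax : |x 1| < 4⁻¹ :=
    lt_of_le_of_lt (abs_coord_le x 1) (by rwa [mem_ball, dist_zero_right] at hx)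
  have hay : |y 1| < 4⁻¹ :=
    lt_of_le_of_lt (abs_coord_le y 1) (by rwa [mem_ball, dist_zero_right] at hy)
  have h6 : (6 : Fin 7) ∈ ({6} : Finset (Fin 7)) ∪ J :=
    Finset.mem_union_left _ (Finset.mem_singleton_self 6)
  by_cases h4 : (4 : Fin 7) ∈ J
  · exact rank_eq_of_e1_mem _ x y
      (e1m_4 _ x h6 (Finset.mem_union_right _ h4))
      (e1m_4 _ y h6 (Finset.mem_union_right _ h4))
  by_cases h5 : (5 : Fin 7) ∈ J
  · exact rank_eq_of_e1_mem _ x y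
      (e1m_5 _ x h6 (Finset.mem_union_right _ h5) hax)
      (e1m_5 _ y h6 (Finset.mem_union_right _ h5) hay)
  by_cases h0 : (0 : Fin 7) ∈ J <;> by_cases h1 : (1 : Fin 7) ∈ J <;>
    by_cases h2 : (2 : Fin 7) ∈ J <;> by_cases h3 : (3 : Fin 7) ∈ J
  -- h0 h1 h2 h3
  · exact rank_eq_of_e1_mem _ x y
      (e1m_01 _ x h6 (Finset.mem_union_right _ h0) (Finset.mem_union_right _ h1) hax)
      (e1m_01 _ y h6 (Finset.mem_union_right _ h0) (Finset.mem_union_right _ h1) hay)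
  -- h0 h1 h2 ¬h3
  · exact rank_eq_of_e1_mem _ x y
      (e1m_01 _ x h6 (Finset.mem_union_right _ h0) (Finset.mem_union_right _ h1) hax)
      (e1m_01 _ y h6 (Finset.mem_union_right _ h0) (Finset.mem_union_right _ h1) hay)
  -- h0 h1 ¬h2 h3
  · exact rank_eq_of_e1_mem _ x y
      (e1m_01 _ x h6 (Finset.mem_union_right _ h0) (Finset.mem_union_right _ h1) hax)
      (e1m_01 _ y h6 (Finset.mem_union_right _ h0) (Finset.mem_union_right _ h1) hay)
  -- h0 h1 ¬h2 ¬h3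
  · exact rank_eq_of_e1_mem _ x y
      (e1m_01 _ x h6 (Finset.mem_union_right _ h0) (Finset.mem_union_right _ h1) hax)
      (e1m_01 _ y h6 (Finset.mem_union_right _ h0) (Finset.mem_union_right _ h1) hay)
  -- h0 ¬h1 h2 h3
  · exact rank_eq_of_e1_mem _ x y
      (e1m_02 _ x h6 (Finset.mem_union_right _ h0) (Finset.mem_union_right _ h2) hax)
      (e1m_02 _ y h6 (Finset.mem_union_right _ h0) (Finset.mem_union_right _ h2) hay)
  -- h0 ¬h1 h2 ¬h3
  · exact rank_eq_of_e1_mem _ x y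
      (e1m_02 _ x h6 (Finset.mem_union_right _ h0) (Finset.mem_union_right _ h2) hax)
      (e1m_02 _ y h6 (Finset.mem_union_right _ h0) (Finset.mem_union_right _ h2) hay)
  -- h0 ¬h1 ¬h2 h3
  · exact rank_eq_of_e1_mem _ x y
      (e1m_03 _ x h6 (Finset.mem_union_right _ h0) (Finset.mem_union_right _ h3) hax)
      (e1m_03 _ y h6 (Finset.mem_union_right _ h0) (Finset.mem_union_right _ h3) hay)
  -- h0 ¬h1 ¬h2 ¬h3 : J = {0}
  · have hJ0 : J = {0} := by
      apply Finset.Subset.antisymm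
      · intro i hi
        have hI := hJ' hi
        fin_cases hI <;> simp_all
      · simpa using h0
    rw [hJ0, rank_J_single x 0 (Or.inl rfl), rank_J_single y 0 (Or.inl rfl)]
  -- ¬h0 h1 h2 h3
  · exact rank_eq_of_e1_mem _ x y
      (e1m_12 _ x h6 (Finset.mem_union_right _ h1) (Finset.mem_union_right _ h2) hax)
      (e1m_12 _ y h6 (Finset.mem_union_right _ h1) (Finset.mem_union_right _ h2) hay)
  -- ¬h0 h1 h2 ¬h3
  · exact rank_eq_of_e1_mem _ x y
      (e1m_12 _ x h6 (Finset.mem_union_right _ h1) (Finset.mem_union_right _ h2) hax)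
      (e1m_12 _ y h6 (Finset.mem_union_right _ h1) (Finset.mem_union_right _ h2) hay)
  -- ¬h0 h1 ¬h2 h3
  · exact rank_eq_of_e1_mem _ x y
      (e1m_13 _ x h6 (Finset.mem_union_right _ h1) (Finset.mem_union_right _ h3) hax)
      (e1m_13 _ y h6 (Finset.mem_union_right _ h1) (Finset.mem_union_right _ h3) hay)
  -- ¬h0 h1 ¬h2 ¬h3 : J = {1}
  · have hJ0 : J = {1} := by
      apply Finset.Subset.antisymm
      · intro i hi
        have hI := hJ' hi
        fin_cases hI <;> simp_all
      · simpa using h1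
    rw [hJ0, rank_J_single x 1 (Or.inr (Or.inl rfl)), rank_J_single y 1 (Or.inr (Or.inl rfl))]
  -- ¬h0 ¬h1 h2 h3
  · exact rank_eq_of_e1_mem _ x y
      (e1m_23 _ x h6 (Finset.mem_union_right _ h2) (Finset.mem_union_right _ h3))
      (e1m_23 _ y h6 (Finset.mem_union_right _ h2) (Finset.mem_union_right _ h3))
  -- ¬h0 ¬h1 h2 ¬h3 : J = {2}
  · have hJ0 : J = {2} := by
      apply Finset.Subset.antisymm
      · intro i hi
        have hI := hJ' hi
        fin_cases hI <;> simp_all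
      · simpa using h2
    rw [hJ0, rank_J_single x 2 (Or.inr (Or.inr (Or.inl rfl))),
      rank_J_single y 2 (Or.inr (Or.inr (Or.inl rfl)))]
  -- ¬h0 ¬h1 ¬h2 h3 : J = {3}
  · have hJ0 : J = {3} := by
      apply Finset.Subset.antisymm
      · intro i hi
        have hI := hJ' hi
        fin_cases hI <;> simp_all
      · simpa using h3
    rw [hJ0, rank_J_single x 3 (Or.inr (Or.inr (Or.inr rfl))),
      rank_J_single y 3 (Or.inr (Or.inr (Or.inr rfl)))]
  -- ¬h0 ¬h1 ¬h2 ¬h3 : J = ∅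
  · have hJ0 : J = ∅ := by
      apply Finset.eq_empty_iff_forall_notMem.mpr
      intro i hi
      have hI := hJ' hi
      fin_cases hI <;> simp_all
    rw [hJ0, rank_J_empty x, rank_J_empty y]

end Ex41


/-- **Example 4.1 (constraint-qualification claims).** At `x̄ = 0`, CRCQ fails but RCRCQ
holds. -/
theorem example41_constraint_qualifications :
    (0 : EuclideanSpace ℝ (Fin 4)) ∈
        Feas ({6} : Finset (Fin 7)) ({0, 1, 2, 3, 4, 5} : Finset (Fin 7)) qEx ∧
    ¬ CRCQat ({6} : Finset (Fin 7)) ({0, 1, 2, 3, 4, 5} : Finset (Fin 7)) qEx 0 ∧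
    RCRCQat ({6} : Finset (Fin 7)) ({0, 1, 2, 3, 4, 5} : Finset (Fin 7)) qEx 0 :=
  ⟨Ex41.feas0, Ex41.not_crcq, Ex41.rcrcq⟩

end
end

section
/- (Example 4.1, tilt-stability claims) In ℝ⁴ with x = (x₁, x₂, x₃, x₄), let φ(x) = (1/4)x₁ − x₁x₂ + x₃ + x₃² + (1/2)x₄², and let Γ := {x ∈ ℝ⁴ : x₁ − x₃ ≤ 0, −x₁ − x₃ ≤ 0, x₂ − 2x₃ ≤ 0, −x₂ − 2x₃ ≤ 0, −x₁ + x₂² ≤ 0, −x₁ ≤ 0, −x₁ + x₂² + x₂ = 0}. Then x̄ := (0,0,0,0) is a stationary point and a tilt-stable local minimizer of the NLP: minimize φ(x) subject to x ∈ Γ, and the exact bound of tilt stability equals 1, i.e. tilt(φ, q, x̄) = 1. -/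
open Filter Topology Metric Set
open scoped RealInnerProductSpace

noncomputable section

variable {n : ℕ} {ι : Type*} [Fintype ι] [DecidableEq ι]

/-- The objective of Example 4.1. -/
def φEx : EuclideanSpace ℝ (Fin 4) → ℝ :=
  fun x => (1 / 4) * x 0 - x 0 * x 1 + x 2 + x 2 ^ 2 + (1 / 2) * x 3 ^ 2

/-! ### Auxiliary material for Example 4.1 -/

local notation "E4" => EuclideanSpace ℝ (Fin 4)

lemma coord_abs_le (x : E4) (i : Fin 4) : |x i| ≤ ‖x‖ := by
  have h := abs_real_inner_le_norm (EuclideanSpace.single i (1:ℝ)) x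
  simpa [EuclideanSpace.inner_single_left] using h

lemma inner_expand (v x : E4) : ⟪v, x⟫ = v 0 * x 0 + v 1 * x 1 + v 2 * x 2 + v 3 * x 3 := by
  simp [PiLp.inner_apply, RCLike.inner_apply, Fin.sum_univ_four]; ring

lemma grad_inner (c : E4) (y : E4) : HasGradientAt (fun x => ⟪c, x⟫) c y := by
  rw [hasGradientAt_iff_hasFDerivAt]
  have h := (InnerProductSpace.toDual ℝ E4 c).hasFDerivAt (x := y)
  exact h.congr_fderiv rfl |>.congr_of_eventuallyEq (by filter_upwards with z; simp)

def vec (a b c d : ℝ) : E4 := (WithLp.equiv 2 (Fin 4 → ℝ)).symm ![a,b,c,d]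

@[simp] lemma vec_apply (a b c d : ℝ) (i : Fin 4) : vec a b c d i = ![a,b,c,d] i := by
  simp [vec]

lemma grad_lin (c : E4) (f : E4 → ℝ) (hf : ∀ x, f x = ⟪c, x⟫) (y : E4) :
    gradient f y = c := by
  have h := grad_inner c y
  have : f = fun x => ⟪c, x⟫ := funext hf
  rw [this]; exact h.gradient

lemma grad_phi : gradient φEx 0 = vec (1/4) 0 1 0 := by
  have hp : ∀ i : Fin 4, HasFDerivAt (fun x : E4 => x i) (EuclideanSpace.proj i : E4 →L[ℝ] ℝ) 0 :=
    fun i => (EuclideanSpace.proj (𝕜 := ℝ) i : E4 →L[ℝ] ℝ).hasFDerivAt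
  have hr : HasFDerivAt (fun x : E4 => -(x 0 * x 1) + (x 2 * x 2) + (1/2)*(x 3 * x 3))
      (0 : E4 →L[ℝ] ℝ) 0 := by
    have h := ((((hp 0).mul (hp 1)).neg.add ((hp 2).mul (hp 2))).add
      (((hp 3).mul (hp 3)).const_mul (1/2)))
    refine h.congr_fderiv ?_
    ext y; simp
  have hlin : HasFDerivAt (fun x : E4 => ⟪vec (1/4) 0 1 0, x⟫)
      (InnerProductSpace.toDual ℝ E4 (vec (1/4) 0 1 0)) 0 :=
    hasGradientAt_iff_hasFDerivAt.mp (grad_inner _ 0)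
  have h2 := hlin.add hr
  have h3 : HasFDerivAt φEx (InnerProductSpace.toDual ℝ E4 (vec (1/4) 0 1 0)) 0 := by
    have hfun : (fun x : E4 => ⟪vec (1/4) 0 1 0, x⟫ +
        (-(x 0 * x 1) + (x 2 * x 2) + (1/2)*(x 3 * x 3))) = φEx := by
      funext x; rw [inner_expand]; simp [φEx]; ring
    rw [← hfun]
    exact h2.congr_fderiv (add_zero _)
  exact (hasGradientAt_iff_hasFDerivAt.mpr h3).gradient

/-- The feasible set of Example 4.1. -/
abbrev ΓEx : Set E4 := Feas ({6} : Finset (Fin 7)) ({0, 1, 2, 3, 4, 5} : Finset (Fin 7)) qEx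

lemma feas_char {x : E4} (hx : x ∈ ΓEx) :
    0 ≤ x 1 ∧ x 0 = x 1 ^ 2 + x 1 ∧ x 0 ≤ x 2 := by
  obtain ⟨hE, hI⟩ := hx
  have h7 : -x 0 + x 1 ^ 2 + x 1 = 0 := hE 6 (by decide)
  have h5 : -x 0 + x 1 ^ 2 ≤ 0 := hI 4 (by decide)
  have h1 : x 0 - x 2 ≤ 0 := hI 0 (by decide)
  refine ⟨by nlinarith, by linarith, by linarith⟩

lemma single_mem_feas (a : ℝ) : EuclideanSpace.single (3 : Fin 4) a ∈ ΓEx := by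
  constructor
  · intro i hi
    fin_cases hi <;> simp [qEx, EuclideanSpace.single_apply, Matrix.vecHead, Matrix.vecTail]
  · intro i hi
    fin_cases hi <;> simp [qEx, EuclideanSpace.single_apply, Matrix.vecHead, Matrix.vecTail]

lemma key_ineq (s t w a v0 v1 v2 v3 : ℝ) (hs : 0 ≤ s) (ha : a = s^2 + s) (hta : a ≤ t)
    (h0 : |v0| ≤ 1/4) (h1 : |v1| ≤ 1/4) (h2 : |v2| ≤ 1/4) :
    (w - v3)^2/2 + (3/4)*(t - a) + (1/2)*s ≤
      a/4 - a*s + t + t^2 + w^2/2 - v0*a - v1*s - v2*t - v3*w + v3^2/2 := by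
  rw [abs_le] at h0 h1 h2
  nlinarith [mul_nonneg (sub_nonneg.2 hta) (by nlinarith : (0:ℝ) ≤ 1/4 + t + a - v2),
    mul_nonneg hs (sq_nonneg s), sq_nonneg s, sq_nonneg (s*s),
    mul_nonneg hs hs]

lemma key_ineq' (v : E4) (hv : ∀ i, |v i| ≤ 1/4) {y : E4} (hy : y ∈ ΓEx) :
    (φEx (EuclideanSpace.single (3 : Fin 4) (v 3)) - ⟪v, EuclideanSpace.single (3 : Fin 4) (v 3)⟫)
      + ((y 3 - v 3)^2/2 + (3/4)*(y 2 - y 0) + (1/2)*(y 1)) ≤ φEx y - ⟪v, y⟫ := by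
  obtain ⟨hy1, hy0, hy2⟩ := feas_char hy
  have h := key_ineq (y 1) (y 2) (y 3) (y 0) (v 0) (v 1) (v 2) (v 3) hy1 hy0 hy2
    (hv 0) (hv 1) (hv 2)
  have e1 : φEx (EuclideanSpace.single (3 : Fin 4) (v 3)) = (1/2) * (v 3)^2 := by
    simp [φEx, EuclideanSpace.single_apply]
  have e2 : ⟪v, EuclideanSpace.single (3 : Fin 4) (v 3)⟫ = v 3 * v 3 := by
    simp [EuclideanSpace.inner_single_right]
  rw [e1, e2, inner_expand]
  simp only [φEx]
  nlinarith [h]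

lemma margmin_eq (v : E4) (γ : ℝ) (hv : ∀ i, |v i| ≤ 1/4) (hγ : |v 3| ≤ γ) :
    MArgmin φEx ΓEx 0 γ v = {EuclideanSpace.single (3 : Fin 4) (v 3)} := by
  set mv := EuclideanSpace.single (3 : Fin 4) (v 3) with hmv
  have hmvmem : mv ∈ ΓEx ∩ Metric.closedBall 0 γ := by
    refine ⟨single_mem_feas _, ?_⟩
    rw [Metric.mem_closedBall, dist_zero_right]
    simpa [mv] using hγ
  ext x
  simp only [MArgmin, Set.mem_setOf_eq, Set.mem_singleton_iff]
  constructor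
  · rintro ⟨hxmem, hxmin⟩
    have h1 := hxmin mv hmvmem
    have h2 := key_ineq' v hv hxmem.1
    obtain ⟨hy1, hy0, hy2⟩ := feas_char hxmem.1
    have e3 : x 3 = v 3 := by nlinarith [sq_nonneg (x 3 - v 3)]
    have e1 : x 1 = 0 := by nlinarith [sq_nonneg (x 3 - v 3)]
    have e0 : x 0 = 0 := by rw [hy0, e1]; ring
    have e2 : x 2 = 0 := by nlinarith [sq_nonneg (x 3 - v 3)]
    ext i
    fin_cases i <;>
      simp [mv, EuclideanSpace.single_apply, e0, e1, e2, e3]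
  · rintro rfl
    refine ⟨hmvmem, fun y hy => ?_⟩
    have h2 := key_ineq' v hv hy.1
    obtain ⟨hy1, hy0, hy2⟩ := feas_char hy.1
    nlinarith [sq_nonneg (y 3 - v 3)]

noncomputable def lamEx : EuclideanSpace ℝ (Fin 7) :=
  (WithLp.equiv 2 (Fin 7 → ℝ)).symm ![1/2,1/2,0,0,0,1/4,0]

lemma zero_mem_feas : (0 : E4) ∈ ΓEx := by
  constructor
  · intro i hi
    fin_cases hi <;> simp [qEx, Matrix.vecHead, Matrix.vecTail]
  · intro i hi
    fin_cases hi <;> simp [qEx, Matrix.vecHead, Matrix.vecTail]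

lemma single_sub_single (a b : ℝ) :
    EuclideanSpace.single (3 : Fin 4) a - EuclideanSpace.single (3 : Fin 4) b
      = EuclideanSpace.single (3 : Fin 4) (a - b) := by
  ext i
  by_cases h : i = 3 <;>
    simp [EuclideanSpace.single_apply, h, PiLp.sub_apply]

lemma single_zero' : EuclideanSpace.single (3 : Fin 4) (0:ℝ) = 0 := by
  ext i
  by_cases h : i = 3 <;> simp [EuclideanSpace.single_apply, h]

lemma tiltwith : TiltStableWith φEx ΓEx 0 1 := by
  refine ⟨1/4, by norm_num, Metric.closedBall 0 (1/4),
    Metric.closedBall_mem_nhds 0 (by norm_num),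
    fun v => EuclideanSpace.single (3 : Fin 4) (v 3), ?_, ?_, ?_⟩
  · show EuclideanSpace.single (3 : Fin 4) ((0:E4) 3) = 0
    rw [show ((0:E4) 3) = (0:ℝ) from rfl, single_zero']
  · intro v hv
    have hn : ‖v‖ ≤ 1/4 := mem_closedBall_zero_iff.mp hv
    exact margmin_eq v (1/4) (fun i => (coord_abs_le v i).trans hn)
      ((coord_abs_le v 3).trans hn)
  · intro v1 h1 v2 h2
    rw [single_sub_single, EuclideanSpace.norm_single, one_mul]
    have : v1 3 - v2 3 = (v1 - v2) 3 := by simp [PiLp.sub_apply]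
    rw [Real.norm_eq_abs, this]
    exact coord_abs_le _ 3

lemma tilt_lb (κ : ℝ) (h : TiltStableWith φEx ΓEx 0 κ) : 1 ≤ κ := by
  obtain ⟨γ, hγ, W, hW, m, hm0, hmeq, hlip⟩ := h
  obtain ⟨ε, hε, hball⟩ := Metric.mem_nhds_iff.mp hW
  set δ := min (min (ε/2) γ) (1/4) with hδ
  have hδpos : 0 < δ := lt_min (lt_min (by linarith) hγ) (by norm_num)
  have hδε : δ < ε := lt_of_le_of_lt ((min_le_left _ _).trans (min_le_left _ _)) (by linarith)
  have hδγ : δ ≤ γ := (min_le_left _ _).trans (min_le_right _ _)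
  have hδ4 : δ ≤ 1/4 := min_le_right _ _
  set v : E4 := EuclideanSpace.single (3 : Fin 4) δ with hv
  have hv3 : v 3 = δ := by simp [hv, EuclideanSpace.single_apply]
  have hvW : v ∈ W := hball (by
    rw [Metric.mem_ball, dist_zero_right, hv, EuclideanSpace.norm_single,
      Real.norm_eq_abs, abs_of_pos hδpos]
    exact hδε)
  have h0W : (0 : E4) ∈ W := mem_of_mem_nhds hW
  have hcoord : ∀ i, |v i| ≤ 1/4 := by
    intro i
    by_cases h : i = 3
    · simpa [hv, EuclideanSpace.single_apply, h, abs_of_pos hδpos] using hδ4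
    · norm_num [hv, EuclideanSpace.single_apply, h]
  have hm : MArgmin φEx ΓEx 0 γ v = {EuclideanSpace.single (3 : Fin 4) (v 3)} :=
    margmin_eq v γ hcoord (by rw [hv3, abs_of_pos hδpos]; exact hδγ)
  rw [hmeq v hvW] at hm
  have hmv : m v = EuclideanSpace.single (3 : Fin 4) δ := by
    rw [← hv3]; exact Set.singleton_eq_singleton_iff.mp hm
  have hlip' := hlip v hvW 0 h0W
  rw [hmv, hm0, sub_zero] at hlip'
  simp only [EuclideanSpace.norm_single, Real.norm_eq_abs, abs_of_pos hδpos] at hlip'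
  nlinarith


/-- **Example 4.1 (tilt-stability claims).** `x̄ = 0` is a stationary point and a tilt-stable
local minimizer of (NLP1), with exact bound of tilt stability equal to `1`. -/
theorem example41_tilt_stability :
    (0 : EuclideanSpace ℝ (Fin 4)) ∈
        Feas ({6} : Finset (Fin 7)) ({0, 1, 2, 3, 4, 5} : Finset (Fin 7)) qEx ∧
    (Mult ({0, 1, 2, 3, 4, 5} : Finset (Fin 7)) qEx 0 (-gradient φEx 0)).Nonempty ∧
    TiltStable φEx (Feas ({6} : Finset (Fin 7)) ({0, 1, 2, 3, 4, 5} : Finset (Fin 7)) qEx) 0 ∧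
    TiltBound φEx (Feas ({6} : Finset (Fin 7)) ({0, 1, 2, 3, 4, 5} : Finset (Fin 7)) qEx) 0
      = 1 := by
  refine ⟨zero_mem_feas, ?_, ⟨1, one_pos, tiltwith⟩, ?_⟩
  · -- Multiplier existence
    refine ⟨lamEx, ?_, ?_⟩
    · have g0 : gradient (qEx 0) 0 = vec 1 0 (-1) 0 := by
        apply grad_lin; intro x; rw [inner_expand]
        show x 0 - x 2 = _; simp; ring
      have g1 : gradient (qEx 1) 0 = vec (-1) 0 (-1) 0 := by
        apply grad_lin; intro x; rw [inner_expand]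
        show -x 0 - x 2 = _; simp; ring
      have g5 : gradient (qEx 5) 0 = vec (-1) 0 0 0 := by
        apply grad_lin; intro x; rw [inner_expand]
        show -x 0 = _; simp
      rw [Fin.sum_univ_seven]
      rw [show lamEx 0 = 1/2 from rfl, show lamEx 1 = 1/2 from rfl,
        show lamEx 2 = 0 from rfl, show lamEx 3 = 0 from rfl,
        show lamEx 4 = 0 from rfl, show lamEx 5 = 1/4 from rfl,
        show lamEx 6 = 0 from rfl, g0, g1, g5, grad_phi]
      simp only [zero_smul, add_zero, zero_add]
      ext i
      fin_cases i <;>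
        simp [PiLp.add_apply, PiLp.smul_apply, PiLp.neg_apply] <;> norm_num
    · intro i hi
      have hq : qEx i (0 : E4) = 0 := by
        fin_cases i <;>
          simp [qEx, Matrix.vecHead, Matrix.vecTail,
            show ∀ j : Fin 4, (0:E4) j = 0 from fun _ => rfl]
      have hc : ∀ j : Fin 7, 0 ≤ lamEx j := by
        intro j; fin_cases j <;> norm_num [lamEx]
      exact ⟨hc i, by rw [hq]; ring⟩
  · -- TiltBound = 1
    have hmem : (1:ℝ) ∈ {κ : ℝ | 0 < κ ∧ TiltStableWith φEx ΓEx 0 κ} := ⟨one_pos, tiltwith⟩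
    refine le_antisymm (csInf_le ⟨0, fun κ hκ => hκ.1.le⟩ hmem)
      (le_csInf ⟨1, hmem⟩ fun κ hκ => tilt_lb κ hκ.2)

end
end
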